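/- arXiv:1004.1618 — 3 statements merged into one kernel-verified Lean document; each statement's English description precedes it below -/
import Mathlib

section
/- Let B : (T,∞) → ℝ^{n×n} be a bounded measurable matrix-valued function (not necessarily continuous), and let φ : (T,∞) → ℝⁿ be a solution of the linear system dφ/dt = B(t)φ (so φ is Lipschitz continuous and satisfies the equation almost everywhere). Then for all t ≥ s > T, |φ(t)| ≤ |φ(s)| exp( ∫_s^t μ(B(τ)) dτ ), where μ(B) denotes the largest eigenvalue of the symmetric part (B + Bᵗ)/2. -/
open MeasureTheory Set Filter
open scoped Topology

noncomputable section

/-- The Euclidean norm of a vector `v : Fin n → ℝ`. -/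
def euclNorm {n : ℕ} (v : Fin n → ℝ) : ℝ := Real.sqrt (∑ i, v i ^ 2)

/-- `μ(B)`: the largest eigenvalue of the symmetric part `(B + Bᵗ)/2` of `B`. -/
def mu {n : ℕ} (B : Matrix (Fin n) (Fin n) ℝ) : ℝ :=
  sSup {c : ℝ | Module.End.HasEigenvalue
    (Matrix.toLin' (((2 : ℝ)⁻¹) • (B + B.transpose))) c}

/-- A solution of `dφ/dt = B(t)φ` on `(T,∞)` for bounded measurable `B`:
a Lipschitz function satisfying the equation almost everywhere. -/
def IsAESol (n : ℕ) (T : ℝ) (B : ℝ → Matrix (Fin n) (Fin n) ℝ)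
    (φ : ℝ → Fin n → ℝ) : Prop :=
  (∃ L : NNReal, LipschitzOnWith L φ (Ioi T)) ∧
    ∀ᵐ t ∂(volume.restrict (Ioi T)), HasDerivAt φ ((B t).mulVec (φ t)) t

set_option linter.unusedSectionVars false
set_option maxHeartbeats 1000000

lemma abs_exp_sub_exp_le {p q m : ℝ} (hp : p ≤ m) (hq : q ≤ m) :
    |Real.exp p - Real.exp q| ≤ Real.exp m * |p - q| := by
  wlog hpq : q ≤ p generalizing p q
  · rw [abs_sub_comm, abs_sub_comm p q]
    exact this hq hp (le_of_not_ge hpq)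
  rw [abs_of_nonneg (sub_nonneg.mpr (Real.exp_le_exp.mpr hpq)),
    abs_of_nonneg (sub_nonneg.mpr hpq)]
  have h1 : Real.exp p - Real.exp q = Real.exp q * (Real.exp (p - q) - 1) := by
    rw [mul_sub, ← Real.exp_add, mul_one]
    ring_nf
  have h2 : Real.exp (p - q) - 1 ≤ (p - q) * Real.exp (p - q) := by
    have h3 := mul_le_mul_of_nonneg_right (Real.add_one_le_exp (-(p - q)))
      (Real.exp_pos (p - q)).le
    rw [← Real.exp_add, neg_add_cancel, Real.exp_zero] at h3
    nlinarith
  have h4 : Real.exp q * Real.exp (p - q) = Real.exp p := by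
    rw [← Real.exp_add]; ring_nf
  calc Real.exp p - Real.exp q = Real.exp q * (Real.exp (p - q) - 1) := h1
    _ ≤ Real.exp q * ((p - q) * Real.exp (p - q)) := by
        apply mul_le_mul_of_nonneg_left h2 (Real.exp_pos q).le
    _ = (p - q) * (Real.exp q * Real.exp (p - q)) := by ring
    _ = (p - q) * Real.exp p := by rw [h4]
    _ ≤ Real.exp m * (p - q) := by
        nlinarith [Real.exp_le_exp.mpr hp, sub_nonneg.mpr hpq]

namespace Waz

variable {n : ℕ}

abbrev E (n : ℕ) := EuclideanSpace ℝ (Fin n)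

def symPart (A : Matrix (Fin n) (Fin n) ℝ) : Matrix (Fin n) (Fin n) ℝ :=
  ((2:ℝ)⁻¹) • (A + A.transpose)

lemma symPart_isHermitian (A : Matrix (Fin n) (Fin n) ℝ) : (symPart A).IsHermitian := by
  unfold symPart
  ext i j
  simp [Matrix.IsHermitian, Matrix.conjTranspose_apply, Matrix.transpose_apply, mul_comm,
    add_comm]
  ring

def TT (A : Matrix (Fin n) (Fin n) ℝ) : E n →ₗ[ℝ] E n := Matrix.toEuclideanLin (symPart A)

lemma TT_isSymmetric (A : Matrix (Fin n) (Fin n) ℝ) : (TT A).IsSymmetric :=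
  (Matrix.isHermitian_iff_isSymmetric).mp (symPart_isHermitian A)

lemma TT_apply (A : Matrix (Fin n) (Fin n) ℝ) (x : E n) :
    TT A x = (symPart A).mulVec x := by
  rfl

/-- transfer of eigenvalues -/
lemma hasEigenvalue_TT_iff (A : Matrix (Fin n) (Fin n) ℝ) (c : ℝ) :
    Module.End.HasEigenvalue (TT A) c ↔
      Module.End.HasEigenvalue (Matrix.toLin' (((2 : ℝ)⁻¹) • (A + A.transpose))) c := by
  rw [Module.End.hasEigenvalue_iff, Module.End.hasEigenvalue_iff]
  constructor
  · intro h
    obtain ⟨x, hx, hx0⟩ := Submodule.exists_mem_ne_zero_of_ne_bot h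
    rw [Module.End.mem_eigenspace_iff] at hx
    replace hx := congrArg WithLp.ofLp hx
    rw [TT_apply] at hx
    apply Submodule.ne_bot_iff _ |>.2
    refine ⟨(WithLp.equiv 2 _) x, ?_, ?_⟩
    · rw [Module.End.mem_eigenspace_iff, Matrix.toLin'_apply]
      exact hx
    · simpa using hx0
  · intro h
    obtain ⟨x, hx, hx0⟩ := Submodule.exists_mem_ne_zero_of_ne_bot h
    rw [Module.End.mem_eigenspace_iff, Matrix.toLin'_apply] at hx
    apply Submodule.ne_bot_iff _ |>.2
    refine ⟨(WithLp.equiv 2 _).symm x, ?_, ?_⟩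
    · rw [Module.End.mem_eigenspace_iff]
      apply (WithLp.equiv 2 _).injective
      exact hx
    · simpa using hx0

def q (A : Matrix (Fin n) (Fin n) ℝ) (x : E n) : ℝ := inner ℝ (TT A x) x

end Waz

namespace Waz2
open Waz

variable {n : ℕ}

lemma q_continuous (A : Matrix (Fin n) (Fin n) ℝ) : Continuous (q A) := by
  have hT : Continuous (TT A) := (TT A).continuous_of_finiteDimensional
  exact hT.inner continuous_id

lemma q_smul (A : Matrix (Fin n) (Fin n) ℝ) (c : ℝ) (x : E n) :
    q A (c • x) = c ^ 2 * q A x := by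
  simp only [q, LinearMap.map_smul, inner_smul_left, inner_smul_right, RCLike.conj_to_real]
  ring

lemma bddAbove_q_sphere (A : Matrix (Fin n) (Fin n) ℝ) :
    BddAbove (q A '' Metric.sphere (0 : E n) 1) :=
  ((isCompact_sphere (0 : E n) 1).image (q_continuous A)).bddAbove

lemma bddAbove_range_q_sphere (A : Matrix (Fin n) (Fin n) ℝ) :
    BddAbove (Set.range fun x : Metric.sphere (0 : E n) 1 => q A x) := by
  rw [← Set.image_eq_range]
  exact bddAbove_q_sphere A

variable [NeZero n]

instance : Nonempty (Fin n) := ⟨⟨0, Nat.pos_of_ne_zero (NeZero.ne n)⟩⟩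

lemma sphere_nonempty' : (Metric.sphere (0 : E n) 1).Nonempty :=
  NormedSpace.sphere_nonempty.mpr zero_le_one

lemma range_rayleigh_eq (A : Matrix (Fin n) (Fin n) ℝ) :
    (Set.range fun x : {x : E n // x ≠ 0} =>
        RCLike.re (inner ℝ (TT A x.1) x.1 : ℝ) / ‖(x : E n)‖ ^ 2)
      = q A '' Metric.sphere (0 : E n) 1 := by
  ext c
  constructor
  · rintro ⟨⟨x, hx⟩, rfl⟩
    have hnx : ‖x‖ ≠ 0 := norm_ne_zero_iff.mpr hx
    refine ⟨‖x‖⁻¹ • x, ?_, ?_⟩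
    · simp [norm_smul, abs_of_nonneg (norm_nonneg x), inv_mul_cancel₀ hnx]
    · rw [q_smul]
      field_simp [q]
      simp [q]
  · rintro ⟨x, hx, rfl⟩
    have hx1 : ‖x‖ = 1 := by simpa using hx
    have hx0 : x ≠ 0 := by
      intro h; rw [h] at hx1; simp at hx1
    exact ⟨⟨x, hx0⟩, by simp [hx1, q]⟩

lemma mu_eq (A : Matrix (Fin n) (Fin n) ℝ) :
    mu A = ⨆ x : Metric.sphere (0 : E n) 1, q A (x : E n) := by
  classical
  set S : Set ℝ := {c : ℝ | Module.End.HasEigenvalue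
    (Matrix.toLin' (((2 : ℝ)⁻¹) • (A + A.transpose))) c} with hS
  have hSeq : S = {c : ℝ | Module.End.HasEigenvalue (TT A) c} := by
    ext c; exact (hasEigenvalue_TT_iff A c).symm
  have hsup : (⨆ x : {x : E n // x ≠ 0}, RCLike.re (inner ℝ (TT A x.1) x.1 : ℝ) / ‖(x : E n)‖ ^ 2)
      = ⨆ x : Metric.sphere (0 : E n) 1, q A (x : E n) := by
    rw [iSup, iSup, range_rayleigh_eq A, Set.image_eq_range]
  have hr : Module.End.HasEigenvalue (TT A)
      (⨆ x : {x : E n // x ≠ 0}, RCLike.re (inner ℝ (TT A x.1) x.1 : ℝ) / ‖(x : E n)‖ ^ 2) :=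
    LinearMap.IsSymmetric.hasEigenvalue_iSup_of_finiteDimensional (TT_isSymmetric A)
  -- every eigenvalue is a value of q on the sphere
  have key : ∀ c ∈ S, ∃ x ∈ Metric.sphere (0 : E n) 1, q A x = c := by
    intro c hc
    rw [hSeq] at hc
    obtain ⟨x, hx, hx0⟩ := Submodule.exists_mem_ne_zero_of_ne_bot hc
    rw [Module.End.mem_eigenspace_iff] at hx
    have hnx : ‖x‖ ≠ 0 := norm_ne_zero_iff.mpr hx0
    refine ⟨‖x‖⁻¹ • x, ?_, ?_⟩
    · simp [norm_smul, abs_of_nonneg (norm_nonneg x), inv_mul_cancel₀ hnx]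
    · rw [q_smul, q, hx, inner_smul_left]
      simp only [RCLike.conj_to_real, real_inner_self_eq_norm_sq]
      field_simp
  have hbdd : BddAbove S := by
    obtain ⟨b, hb⟩ := bddAbove_q_sphere A
    refine ⟨b, fun c hc => ?_⟩
    obtain ⟨x, hxs, hxq⟩ := key c hc
    exact hxq ▸ hb ⟨x, hxs, rfl⟩
  have hrS : (⨆ x : Metric.sphere (0 : E n) 1, q A (x : E n)) ∈ S := by
    rw [hSeq]; rw [← hsup]; exact hr
  refine le_antisymm (csSup_le ⟨_, hrS⟩ fun c hc => ?_) (le_csSup hbdd hrS)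
  obtain ⟨x, hxs, hxq⟩ := key c hc
  rw [← hxq]
  exact le_ciSup (bddAbove_range_q_sphere A) (⟨x, hxs⟩ : Metric.sphere (0 : E n) 1)

lemma q_le_mu (A : Matrix (Fin n) (Fin n) ℝ) (x : E n) :
    q A x ≤ mu A * ‖x‖ ^ 2 := by
  rcases eq_or_ne x 0 with rfl | hx
  · simp [q]
  · have hnx : ‖x‖ ≠ 0 := norm_ne_zero_iff.mpr hx
    have hmem : (‖x‖⁻¹ • x) ∈ Metric.sphere (0 : E n) 1 := by
      simp [norm_smul, abs_of_nonneg (norm_nonneg x), inv_mul_cancel₀ hnx]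
    have h1 : q A (‖x‖⁻¹ • x) ≤ mu A := by
      rw [mu_eq A]
      exact le_ciSup (bddAbove_range_q_sphere A)
        (⟨_, hmem⟩ : Metric.sphere (0 : E n) 1)
    have h2 : q A (‖x‖⁻¹ • x) = (‖x‖ ^ 2)⁻¹ * q A x := by
      rw [q_smul]; ring_nf
    rw [h2] at h1
    have := mul_le_mul_of_nonneg_right h1 (by positivity : (0:ℝ) ≤ ‖x‖ ^ 2)
    calc q A x = (‖x‖ ^ 2)⁻¹ * q A x * ‖x‖ ^ 2 := by field_simp
    _ ≤ mu A * ‖x‖ ^ 2 := this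

end Waz2

namespace Waz3
open Waz Waz2

variable {n : ℕ}

lemma q_eq_sum (A : Matrix (Fin n) (Fin n) ℝ) (x : E n) :
    q A x = ∑ i, ((symPart A).mulVec (x : Fin n → ℝ)) i * x i := by
  simp [q, TT_apply, PiLp.inner_apply, RCLike.inner_apply, conj_trivial]
  exact Finset.sum_congr rfl fun _ _ => mul_comm _ _

lemma symPart_apply (A : Matrix (Fin n) (Fin n) ℝ) (i j : Fin n) :
    symPart A i j = 2⁻¹ * (A i j + A j i) := by
  simp [symPart, Matrix.smul_apply, Matrix.add_apply, Matrix.transpose_apply]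

lemma sum_transpose_quad (A : Matrix (Fin n) (Fin n) ℝ) (x : Fin n → ℝ) :
    ∑ i, (A.transpose.mulVec x) i * x i = ∑ i, (A.mulVec x) i * x i := by
  simp only [Matrix.mulVec, dotProduct, Matrix.transpose_apply, Finset.sum_mul]
  rw [Finset.sum_comm]
  exact Finset.sum_congr rfl fun i _ => Finset.sum_congr rfl fun j _ => by ring

lemma q_equiv_symm (A : Matrix (Fin n) (Fin n) ℝ) (x : Fin n → ℝ) :
    q A ((WithLp.equiv 2 (Fin n → ℝ)).symm x) = ∑ i, x i * (A.mulVec x) i := by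
  rw [q_eq_sum]
  have hx : ((WithLp.equiv 2 (Fin n → ℝ)).symm x : Fin n → ℝ) = x := rfl
  rw [hx]
  have hmv : (symPart A).mulVec x = (2:ℝ)⁻¹ • (A.mulVec x + A.transpose.mulVec x) := by
    simp [symPart, Matrix.smul_mulVec, Matrix.add_mulVec]
  rw [hmv]
  simp only [Pi.smul_apply, Pi.add_apply, smul_eq_mul]
  have key := sum_transpose_quad A x
  calc ∑ i, 2⁻¹ * ((A.mulVec x) i + (A.transpose.mulVec x) i) * x i
      = ∑ i, (2⁻¹ * ((A.mulVec x) i * x i) + 2⁻¹ * ((A.transpose.mulVec x) i * x i)) :=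
        Finset.sum_congr rfl fun i _ => by ring
    _ = 2⁻¹ * (∑ i, (A.mulVec x) i * x i) + 2⁻¹ * (∑ i, (A.transpose.mulVec x) i * x i) := by
        rw [Finset.sum_add_distrib, ← Finset.mul_sum, ← Finset.mul_sum]
    _ = ∑ i, (A.mulVec x) i * x i := by rw [key]; ring
    _ = ∑ i, x i * (A.mulVec x) i := Finset.sum_congr rfl fun i _ => mul_comm _ _

lemma norm_equiv_symm_sq (x : Fin n → ℝ) :
    ‖(WithLp.equiv 2 (Fin n → ℝ)).symm x‖ ^ 2 = ∑ i, x i ^ 2 := by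
  rw [EuclideanSpace.norm_eq]
  rw [Real.sq_sqrt (by positivity)]
  exact Finset.sum_congr rfl fun i _ => by rw [Real.norm_eq_abs, sq_abs]; rfl

variable [NeZero n]

/-- Main quadratic bound in coordinates. -/
lemma sum_quad_le_mu (A : Matrix (Fin n) (Fin n) ℝ) (x : Fin n → ℝ) :
    ∑ i, x i * (A.mulVec x) i ≤ mu A * ∑ i, x i ^ 2 := by
  have := q_le_mu A ((WithLp.equiv 2 (Fin n → ℝ)).symm x)
  rwa [q_equiv_symm, norm_equiv_symm_sq] at this

instance : Nonempty (Metric.sphere (0 : E n) 1) := sphere_nonempty'.to_subtype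

def usv (n : ℕ) [NeZero n] (k : ℕ) : E n :=
  (TopologicalSpace.denseSeq (Metric.sphere (0 : E n) 1) k : E n)

lemma usv_mem (k : ℕ) : usv n k ∈ Metric.sphere (0 : E n) 1 :=
  (TopologicalSpace.denseSeq (Metric.sphere (0 : E n) 1) k).2

lemma iSup_sphere_eq_iSup_seq (A : Matrix (Fin n) (Fin n) ℝ) :
    (⨆ x : Metric.sphere (0 : E n) 1, q A (x : E n)) = ⨆ k, q A (usv n k) := by
  have hdense := TopologicalSpace.denseRange_denseSeq (Metric.sphere (0 : E n) 1)
  have hbdd : BddAbove (Set.range fun k => q A (usv n k)) := by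
    apply (bddAbove_q_sphere A).mono
    rintro c ⟨k, rfl⟩
    exact ⟨usv n k, usv_mem k, rfl⟩
  refine le_antisymm (ciSup_le fun x => ?_) (ciSup_le fun k => ?_)
  · have hx : x ∈ closure (Set.range (TopologicalSpace.denseSeq
        (Metric.sphere (0 : E n) 1))) := by
      rw [hdense.closure_range]; trivial
    obtain ⟨v, hv, hvx⟩ := mem_closure_iff_seq_limit.mp hx
    have hcont : Tendsto (fun m => q A ((v m : E n))) atTop (𝓝 (q A (x : E n))) :=
      ((q_continuous A).comp continuous_subtype_val).continuousAt.tendsto.comp hvx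
    refine le_of_tendsto hcont (Filter.Eventually.of_forall fun m => ?_)
    obtain ⟨k, hk⟩ := hv m
    have : ((v m : E n)) = usv n k := by rw [← hk]; rfl
    rw [this]
    exact le_ciSup hbdd k
  · have : q A (usv n k) = q A ((⟨usv n k, usv_mem k⟩ : Metric.sphere (0 : E n) 1) : E n) := rfl
    rw [this]
    exact le_ciSup (bddAbove_range_q_sphere A)
      (⟨usv n k, usv_mem k⟩ : Metric.sphere (0 : E n) 1)

lemma mu_measurable (B : ℝ → Matrix (Fin n) (Fin n) ℝ)
    (hB : ∀ i j, Measurable fun t => B t i j) :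
    Measurable fun t => mu (B t) := by
  have heq : (fun t => mu (B t)) = fun t => ⨆ k, q (B t) (usv n k) := by
    funext t
    rw [mu_eq, iSup_sphere_eq_iSup_seq]
  rw [heq]
  apply Measurable.iSup
  intro k
  set x := usv n k with hxdef
  have hq : (fun t => q (B t) x)
      = fun t => ∑ i, (∑ j, (2:ℝ)⁻¹ * (B t i j + B t j i) * x j) * x i := by
    funext t
    rw [q_eq_sum]
    refine Finset.sum_congr rfl fun i _ => ?_
    have : ((symPart (B t)).mulVec (x : Fin n → ℝ)) i = ∑ j, symPart (B t) i j * x j := rfl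
    rw [this]
    exact congrArg (· * x i) (Finset.sum_congr rfl fun j _ => by rw [symPart_apply])
  rw [hq]
  apply Finset.measurable_sum
  intro i _
  apply Measurable.mul _ measurable_const
  apply Finset.measurable_sum
  intro j _
  exact (((hB i j).add (hB j i)).const_mul _).mul measurable_const

lemma coord_le_norm (x : E n) (i : Fin n) : |x i| ≤ ‖x‖ := by
  rw [EuclideanSpace.norm_eq]
  rw [← Real.sqrt_sq_eq_abs]
  apply Real.sqrt_le_sqrt
  have : (x i)^2 ≤ ∑ j, ‖x j‖^2 := by
    have := Finset.single_le_sum (f := fun j => ‖x j‖^2)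
      (fun j _ => by positivity) (Finset.mem_univ i)
    simpa [Real.norm_eq_abs, sq_abs] using this
  exact this

lemma abs_q_le (A : Matrix (Fin n) (Fin n) ℝ) (C : ℝ) (hC : ∀ i j, |A i j| ≤ C)
    (x : E n) (hx : x ∈ Metric.sphere (0 : E n) 1) :
    |q A x| ≤ (n : ℝ)^2 * C := by
  have hx1 : ‖x‖ = 1 := by simpa using hx
  have hco : ∀ i, |x i| ≤ 1 := fun i => (coord_le_norm x i).trans_eq hx1
  have hS : ∀ i j, |symPart A i j| ≤ C := by
    intro i j
    rw [symPart_apply]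
    calc |2⁻¹ * (A i j + A j i)| = 2⁻¹ * |A i j + A j i| := by
          rw [abs_mul]; norm_num
    _ ≤ 2⁻¹ * (|A i j| + |A j i|) := by
          gcongr; exact abs_add_le _ _
    _ ≤ 2⁻¹ * (C + C) := by gcongr <;> [exact hC i j; exact hC j i]
    _ = C := by ring
  have hC0 : 0 ≤ C := le_trans (abs_nonneg _) (hC ⟨0, Nat.pos_of_ne_zero (NeZero.ne n)⟩
    ⟨0, Nat.pos_of_ne_zero (NeZero.ne n)⟩)
  rw [q_eq_sum]
  calc |∑ i, ((symPart A).mulVec (x : Fin n → ℝ)) i * x i|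
      ≤ ∑ i, |((symPart A).mulVec (x : Fin n → ℝ)) i * x i| := Finset.abs_sum_le_sum_abs _ _
    _ ≤ ∑ _i : Fin n, (n : ℝ) * C := by
        apply Finset.sum_le_sum
        intro i _
        rw [abs_mul]
        calc |((symPart A).mulVec (x : Fin n → ℝ)) i| * |x i|
            ≤ |((symPart A).mulVec (x : Fin n → ℝ)) i| * 1 :=
              mul_le_mul_of_nonneg_left (hco i) (abs_nonneg _)
          _ = |∑ j, symPart A i j * x j| := by rw [mul_one]; rfl
          _ ≤ ∑ j, |symPart A i j * x j| := Finset.abs_sum_le_sum_abs _ _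
          _ ≤ ∑ _j : Fin n, C := by
              apply Finset.sum_le_sum
              intro j _
              rw [abs_mul]
              calc |symPart A i j| * |x j| ≤ C * 1 :=
                    mul_le_mul (hS i j) (hco j) (abs_nonneg _) hC0
                _ = C := mul_one C
          _ = (n : ℝ) * C := by simp [Finset.sum_const]
    _ = (n : ℝ)^2 * C := by simp [Finset.sum_const]; ring

lemma abs_mu_le (A : Matrix (Fin n) (Fin n) ℝ) (C : ℝ) (hC : ∀ i j, |A i j| ≤ C) :
    |mu A| ≤ (n : ℝ)^2 * C := by
  rw [mu_eq, abs_le]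
  obtain ⟨x₀, hx₀⟩ := sphere_nonempty' (n := n)
  constructor
  · have h1 : -((n:ℝ)^2 * C) ≤ q A x₀ := by
      have := abs_q_le A C hC x₀ hx₀
      linarith [abs_le.mp this]
    exact h1.trans (le_ciSup (bddAbove_range_q_sphere A) (⟨x₀, hx₀⟩ : Metric.sphere (0 : E n) 1))
  · exact ciSup_le fun x => (abs_le.mp (abs_q_le A C hC x x.2)).2

end Waz3


namespace Waz4

lemma integrableOn_of_bounded' {f : ℝ → ℝ} {C : ℝ} (hf : Measurable f)
    (hC : ∀ x, |f x| ≤ C) {s : Set ℝ} (hs : volume s ≠ ⊤) :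
    IntegrableOn f s := by
  haveI : IsFiniteMeasure (volume.restrict s) := by
    constructor
    rw [Measure.restrict_apply_univ]
    exact lt_top_iff_ne_top.mpr hs
  refine ⟨hf.aestronglyMeasurable.restrict, ?_⟩
  exact HasFiniteIntegral.of_bounded (C := C)
    (ae_of_all _ fun x => by rw [Real.norm_eq_abs]; exact hC x)

lemma locallyIntegrable_of_bounded {f : ℝ → ℝ} {C : ℝ} (hf : Measurable f)
    (hC : ∀ x, |f x| ≤ C) : LocallyIntegrable f volume := by
  rw [locallyIntegrable_iff]
  intro K hK
  exact integrableOn_of_bounded' hf hC hK.measure_lt_top.ne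

lemma intervalIntegrable_of_bounded {f : ℝ → ℝ} {C : ℝ} (hf : Measurable f)
    (hC : ∀ x, |f x| ≤ C) (a b : ℝ) : IntervalIntegrable f volume a b := by
  rw [intervalIntegrable_iff]
  exact integrableOn_of_bounded' hf hC measure_Ioc_lt_top.ne

/-- one-dimensional Lebesgue differentiation theorem for bounded measurable functions -/
lemma ae_hasDerivAt_integral {f : ℝ → ℝ} {C : ℝ} (hf : Measurable f)
    (hC : ∀ x, |f x| ≤ C) (s : ℝ) :
    ∀ᵐ x ∂(volume : Measure ℝ), HasDerivAt (fun y => ∫ u in s..y, f u) (f x) x := by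
  have hloc := locallyIntegrable_of_bounded hf hC
  have hae := IsUnifLocDoublingMeasure.ae_tendsto_average_norm_sub
    (μ := (volume : Measure ℝ)) hloc 1
  filter_upwards [hae] with x hx
  have havg : Tendsto (fun r : ℝ => ⨍ y in Metric.closedBall x r, |f y - f x|)
      (𝓝[>] (0:ℝ)) (𝓝 0) := by
    have hmem : ∀ᶠ r : ℝ in 𝓝[>] 0, x ∈ Metric.closedBall x (1 * r) := by
      filter_upwards [self_mem_nhdsWithin] with r hr
      simp only [Metric.mem_closedBall, dist_self, one_mul]
      exact le_of_lt hr
    have := hx (fun _ : ℝ => x) id tendsto_id hmem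
    simpa [Real.norm_eq_abs] using this
  rw [hasDerivAt_iff_tendsto_slope]
  set F := fun y => ∫ u in s..y, f u with hF
  have hbound : ∀ y, y ≠ x → |slope F x y - f x|
      ≤ 2 * ⨍ u in Metric.closedBall x |y - x|, |f u - f x| := by
    intro y hy
    have hyx : y - x ≠ 0 := sub_ne_zero.mpr hy
    have hr : 0 < |y - x| := abs_pos.mpr hyx
    have hFd : F y - F x = ∫ u in x..y, f u :=
      intervalIntegral.integral_interval_sub_left
        (intervalIntegrable_of_bounded hf hC s y) (intervalIntegrable_of_bounded hf hC s x)
    have h1 : slope F x y - f x = (∫ u in x..y, (f u - f x)) / (y - x) := by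
      rw [slope_def_field, hFd,
        intervalIntegral.integral_sub (intervalIntegrable_of_bounded hf hC x y)
          (intervalIntegrable_const), intervalIntegral.integral_const, smul_eq_mul]
      field_simp
    have hint2 : IntegrableOn (fun u => |f u - f x|) (Metric.closedBall x |y - x|) := by
      apply integrableOn_of_bounded' (C := C + |f x|)
      · exact (hf.sub measurable_const).abs
      · intro u
        rw [abs_abs]
        exact (abs_sub _ _).trans (add_le_add (hC u) le_rfl)
      · exact (measure_closedBall_lt_top).ne
    have hsub : Set.uIoc x y ⊆ Metric.closedBall x |y - x| := by
      intro u hu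
      have hu' : u ∈ Set.uIcc x y := Set.Ioc_subset_Icc_self hu
      rw [Set.mem_uIcc] at hu'
      rw [Metric.mem_closedBall, Real.dist_eq, abs_le]
      rcases hu' with ⟨h1', h2'⟩ | ⟨h1', h2'⟩ <;>
        rcases abs_cases (y - x) with ⟨he, _⟩ | ⟨he, _⟩ <;>
        constructor <;> linarith
    have h2 : |∫ u in x..y, (f u - f x)| ≤
        ∫ u in Metric.closedBall x |y - x|, |f u - f x| := by
      calc |∫ u in x..y, (f u - f x)| ≤ ∫ u in Set.uIoc x y, |f u - f x| := by
            simpa [Real.norm_eq_abs] using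
              intervalIntegral.norm_integral_le_integral_norm_uIoc
                (f := fun u => f u - f x) (a := x) (b := y) (μ := volume)
        _ ≤ _ := by
            apply setIntegral_mono_set hint2 (ae_of_all _ fun u => abs_nonneg _)
            exact HasSubset.Subset.eventuallyLE hsub
    have h3 : ∫ u in Metric.closedBall x |y - x|, |f u - f x|
        = (2 * |y - x|) * ⨍ u in Metric.closedBall x |y - x|, |f u - f x| := by
      rw [setAverage_eq, Real.volume_real_closedBall (by positivity),
        smul_eq_mul, ← mul_assoc,
        mul_inv_cancel₀ (by positivity), one_mul]
    rw [h1, abs_div]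
    rw [div_le_iff₀ (by rwa [abs_sub_comm] at hr ⊢)]
    calc |∫ u in x..y, (f u - f x)| ≤
        (2 * |y - x|) * ⨍ u in Metric.closedBall x |y - x|, |f u - f x| := h3 ▸ h2
      _ = 2 * (⨍ u in Metric.closedBall x |y - x|, |f u - f x|) * |y - x| := by ring
  have hG : Tendsto (fun y => 2 * ⨍ u in Metric.closedBall x |y - x|, |f u - f x|)
      (𝓝[≠] x) (𝓝 0) := by
    have h1 : Tendsto (fun y : ℝ => |y - x|) (𝓝[≠] x) (𝓝[>] 0) := by
      rw [tendsto_nhdsWithin_iff]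
      constructor
      · have : Tendsto (fun y : ℝ => |y - x|) (𝓝 x) (𝓝 |x - x|) :=
          ((continuous_abs.comp (continuous_id.sub continuous_const)).tendsto x)
        simpa using this.mono_left nhdsWithin_le_nhds
      · filter_upwards [self_mem_nhdsWithin] with y hy
        exact abs_pos.mpr (sub_ne_zero.mpr hy)
    have h2 := havg.comp h1
    have h3 := h2.const_mul (2:ℝ)
    simpa using h3
  have hsq : Tendsto (fun y => |slope F x y - f x|) (𝓝[≠] x) (𝓝 0) := by
    apply squeeze_zero' (Eventually.of_forall fun y => abs_nonneg _) _ hG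
    filter_upwards [self_mem_nhdsWithin] with y hy using hbound y hy
  rw [tendsto_iff_dist_tendsto_zero]
  simpa [Real.dist_eq] using hsq

end Waz4

namespace Waz5
open Waz4

/-- FTC for Lipschitz functions via dominated convergence. -/
lemma lipschitzWith_sub_eq_integral_deriv {f : ℝ → ℝ} {L : NNReal} (hf : LipschitzWith L f)
    {a b : ℝ} (hab : a ≤ b) :
    f b - f a = ∫ x in Set.Ioc a b, deriv f x := by
  have hcont := hf.continuous
  have hint : ∀ c d : ℝ, IntervalIntegrable f volume c d := fun c d =>
    hcont.intervalIntegrable c d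
  set h : ℕ → ℝ := fun k => ((k : ℝ) + 1)⁻¹ with hh
  have hhpos : ∀ k, 0 < h k := fun k => by positivity
  have hh0 : Tendsto h atTop (𝓝 0) := by
    have := tendsto_one_div_add_atTop_nhds_zero_nat (𝕜 := ℝ)
    simpa [hh, one_div] using this
  have hseq : ∀ x : ℝ, Tendsto (fun k => x + h k) atTop (𝓝[≠] x) := by
    intro x
    rw [tendsto_nhdsWithin_iff]
    constructor
    · simpa using tendsto_const_nhds.add hh0
    · exact Eventually.of_forall fun k => by
        simp only [Set.mem_compl_iff, Set.mem_singleton_iff]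
        intro hc
        nlinarith [hhpos k, congrArg (· - x) hc]
  set G : ℕ → ℝ → ℝ := fun k x => (f (x + h k) - f x) / h k with hG
  have hGslope : ∀ k x, G k x = slope f x (x + h k) := by
    intro k x
    rw [slope_def_field]
    simp [hG]
  have hae : ∀ᵐ x ∂(volume.restrict (Set.Ioc a b)),
      Tendsto (fun k => G k x) atTop (𝓝 (deriv f x)) := by
    apply ae_restrict_of_ae
    filter_upwards [hf.ae_differentiableAt_real] with x hx
    have hD := hx.hasDerivAt
    rw [hasDerivAt_iff_tendsto_slope] at hD
    have h2 := hD.comp (hseq x)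
    have : (fun k => G k x) = (slope f x) ∘ (fun k => x + h k) := by
      funext k; exact hGslope k x
    rw [this]
    exact h2
  have hdom : ∀ k, ∀ᵐ x ∂(volume.restrict (Set.Ioc a b)), ‖G k x‖ ≤ (L : ℝ) := by
    intro k
    apply ae_of_all
    intro x
    rw [Real.norm_eq_abs, hG]
    have hd : |f (x + h k) - f x| ≤ (L : ℝ) * |x + h k - x| := by
      have := hf.dist_le_mul (x + h k) x
      rwa [Real.dist_eq, Real.dist_eq] at this
    rw [abs_div, abs_of_pos (hhpos k), div_le_iff₀ (hhpos k)]
    calc |f (x + h k) - f x| ≤ (L : ℝ) * |x + h k - x| := hd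
      _ = (L : ℝ) * h k := by rw [add_sub_cancel_left, abs_of_pos (hhpos k)]
  have hbint : Integrable (fun _ : ℝ => (L : ℝ)) (volume.restrict (Set.Ioc a b)) := by
    apply integrable_const_iff.mpr
    right
    exact ⟨by rw [Measure.restrict_apply_univ]; exact measure_Ioc_lt_top⟩
  have hmeasG : ∀ k, AEStronglyMeasurable (G k) (volume.restrict (Set.Ioc a b)) := fun k =>
    (((hcont.comp (continuous_id.add continuous_const)).sub hcont).div_const
      _).aestronglyMeasurable.restrict
  have hDCT := tendsto_integral_of_dominated_convergence (fun _ => (L : ℝ))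
    hmeasG hbint hdom hae
  have hcalc : ∀ k, ∫ x in Set.Ioc a b, G k x
      = (∫ u in b..(b + h k), f u) / h k - (∫ u in a..(a + h k), f u) / h k := by
    intro k
    rw [← intervalIntegral.integral_of_le hab]
    have e1 : (∫ x in a..b, G k x)
        = ((∫ x in a..b, f (x + h k)) - ∫ x in a..b, f x) / h k := by
      rw [hG]
      rw [intervalIntegral.integral_div]
      congr 1
      exact intervalIntegral.integral_sub
        ((hcont.comp (continuous_id.add continuous_const)).intervalIntegrable a b)
        (hint a b)
    rw [e1, intervalIntegral.integral_comp_add_right f (h k)]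
    have I1 := intervalIntegral.integral_add_adjacent_intervals
      (hint a (a + h k)) (hint (a + h k) (b + h k))
    have I2 := intervalIntegral.integral_add_adjacent_intervals
      (hint a b) (hint b (b + h k))
    rw [div_sub_div_same]
    congr 1
    linarith
  have hlim : ∀ c : ℝ, Tendsto (fun k => (∫ u in c..(c + h k), f u) / h k)
      atTop (𝓝 (f c)) := by
    intro c
    have hD : HasDerivAt (fun y => ∫ u in c..y, f u) (f c) c :=
      intervalIntegral.integral_hasDerivAt_right (hint c c)
        (hcont.stronglyMeasurableAtFilter volume _)
        hcont.continuousAt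
    rw [hasDerivAt_iff_tendsto_slope] at hD
    have h2 := hD.comp (hseq c)
    have : ((slope (fun y => ∫ u in c..y, f u) c) ∘ (fun k => c + h k))
        = fun k => (∫ u in c..(c + h k), f u) / h k := by
      funext k
      simp only [Function.comp_apply, slope_def_field, intervalIntegral.integral_same,
        add_sub_cancel_left]
      rw [sub_zero]
    rwa [this] at h2
  have hfinal : Tendsto (fun k => ∫ x in Set.Ioc a b, G k x) atTop (𝓝 (f b - f a)) := by
    have := (hlim b).sub (hlim a)
    simpa [hcalc] using this
  exact tendsto_nhds_unique hfinal hDCT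

/-- A Lipschitz function on `[a,b]` with a.e. nonpositive derivative on `(a,b)`
is nonincreasing across the interval. -/
lemma le_of_lipschitzOnWith_ae_deriv_nonpos {f : ℝ → ℝ} {L : NNReal} {a b : ℝ} (hab : a ≤ b)
    (hf : LipschitzOnWith L f (Set.Icc a b))
    (hd : ∀ᵐ x ∂(volume : Measure ℝ), x ∈ Set.Ioo a b → ∃ d, HasDerivAt f d x ∧ d ≤ 0) :
    f b ≤ f a := by
  obtain ⟨g, hg, hfg⟩ := hf.extend_real
  have hderiv : ∀ᵐ x ∂(volume : Measure ℝ), x ∈ Set.Ioo a b → deriv g x ≤ 0 := by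
    filter_upwards [hd] with x hx hxm
    obtain ⟨d, hD, hd0⟩ := hx hxm
    have hev : g =ᶠ[𝓝 x] f := by
      filter_upwards [isOpen_Ioo.mem_nhds hxm] with y hy
      exact (hfg (Set.Ioo_subset_Icc_self hy)).symm
    have hDg : HasDerivAt g d x := hD.congr_of_eventuallyEq hev
    rw [hDg.deriv]
    exact hd0
  have hkey := lipschitzWith_sub_eq_integral_deriv hg hab
  have h0 : ∫ x in Set.Ioc a b, deriv g x ≤ 0 := by
    rw [integral_Ioc_eq_integral_Ioo]
    apply integral_nonpos_of_ae
    rw [EventuallyLE, ae_restrict_iff' measurableSet_Ioo]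
    filter_upwards [hderiv] with x hx hxm
    exact hx hxm
  have ha : g a = f a := (hfg (Set.left_mem_Icc.mpr hab)).symm
  have hb : g b = f b := (hfg (Set.right_mem_Icc.mpr hab)).symm
  linarith [hkey]

end Waz5

/-- **Wazewski-type inequality (Section 4).** -/
theorem norm_le_exp_integral_mu
    (n : ℕ) (T : ℝ)
    (B : ℝ → Matrix (Fin n) (Fin n) ℝ)
    (hB_meas : ∀ i j, Measurable fun t => B t i j)
    (hB_bdd : ∃ C : ℝ, ∀ t ∈ Ioi T, ∀ i j, |B t i j| ≤ C)
    (φ : ℝ → Fin n → ℝ)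
    (hφ : IsAESol n T B φ) :
    ∀ s t : ℝ, T < s → s ≤ t →
      euclNorm (φ t) ≤ euclNorm (φ s) * Real.exp (∫ τ in s..t, mu (B τ)) := by
  intro s t hTs hst
  obtain ⟨⟨L, hLip⟩, hODE⟩ := hφ
  obtain ⟨C, hC⟩ := hB_bdd
  rcases Nat.eq_zero_or_pos n with hn | hn
  · have h0 : euclNorm (φ t) = 0 := by subst hn; simp [euclNorm]
    have h1 : euclNorm (φ s) = 0 := by subst hn; simp [euclNorm]
    rw [h0, h1, zero_mul]
  haveI : NeZero n := ⟨hn.ne'⟩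
  have hC0 : 0 ≤ C := (abs_nonneg _).trans (hC s hTs ⟨0, hn⟩ ⟨0, hn⟩)
  -- the integrand, extended by zero
  set fb : ℝ → ℝ := (Ioi T).indicator (fun τ => mu (B τ)) with hfb
  have hfb_meas : Measurable fb :=
    (Waz3.mu_measurable B hB_meas).indicator measurableSet_Ioi
  set Cb : ℝ := (n : ℝ) ^ 2 * C with hCb
  have hCb0 : 0 ≤ Cb := by positivity
  have hfb_bdd : ∀ x, |fb x| ≤ Cb := by
    intro x
    by_cases hx : x ∈ Ioi T
    · rw [hfb, indicator_of_mem hx]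
      exact Waz3.abs_mu_le (B x) C (fun i j => hC x hx i j)
    · rw [hfb, indicator_of_notMem hx]
      simpa using hCb0
  have hfb_int : ∀ a b : ℝ, IntervalIntegrable fb volume a b :=
    Waz4.intervalIntegrable_of_bounded hfb_meas hfb_bdd
  set M : ℝ → ℝ := fun y => ∫ u in s..y, fb u with hM
  set g : ℝ → ℝ := fun τ => ∑ i, φ τ i ^ 2 with hg
  set E : ℝ → ℝ := fun τ => Real.exp (-2 * M τ) with hE
  have hsub : Icc s t ⊆ Ioi T := fun x hx => lt_of_lt_of_le hTs hx.1
  have hts0 : (0:ℝ) ≤ t - s := sub_nonneg.mpr hst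
  -- coordinatewise Lipschitz bound for φ
  have hcoordLip : ∀ i : Fin n, ∀ x ∈ Icc s t, ∀ y ∈ Icc s t,
      |φ x i - φ y i| ≤ (L : ℝ) * |x - y| := by
    intro i x hx y hy
    have h1 := hLip.dist_le_mul x (hsub hx) y (hsub hy)
    have h2 : dist (φ x i) (φ y i) ≤ dist (φ x) (φ y) := dist_le_pi_dist (φ x) (φ y) i
    calc |φ x i - φ y i| = dist (φ x i) (φ y i) := (Real.dist_eq _ _).symm
      _ ≤ dist (φ x) (φ y) := h2
      _ ≤ (L : ℝ) * dist x y := h1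
      _ = (L : ℝ) * |x - y| := by rw [Real.dist_eq]
  set R : ℝ := ‖φ s‖ + (L : ℝ) * (t - s) with hR
  have hR0 : 0 ≤ R := by positivity
  have hcoordBdd : ∀ i : Fin n, ∀ x ∈ Icc s t, |φ x i| ≤ R := by
    intro i x hx
    have h1 : |φ x i - φ s i| ≤ (L : ℝ) * |x - s| :=
      hcoordLip i x hx s (left_mem_Icc.mpr hst)
    have h2 : |φ s i| ≤ ‖φ s‖ := by
      have := norm_le_pi_norm (φ s) i
      rwa [Real.norm_eq_abs] at this
    have h3 : |x - s| ≤ t - s := by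
      rw [abs_of_nonneg (sub_nonneg.mpr hx.1)]
      linarith [hx.2]
    have h4 : |φ x i| ≤ |φ s i| + |φ x i - φ s i| := by
      have := abs_add_le (φ s i) (φ x i - φ s i)
      simpa using this
    have h5 : (L : ℝ) * |x - s| ≤ (L : ℝ) * (t - s) :=
      mul_le_mul_of_nonneg_left h3 L.2
    rw [hR]; linarith
  -- g is Lipschitz and bounded on [s,t]
  have hgLip : ∀ x ∈ Icc s t, ∀ y ∈ Icc s t,
      |g x - g y| ≤ ((n : ℝ) * (2 * R * L)) * |x - y| := by
    intro x hx y hy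
    have he : g x - g y = ∑ i, (φ x i ^ 2 - φ y i ^ 2) := by
      rw [hg, Finset.sum_sub_distrib]
    calc |g x - g y| = |∑ i, (φ x i ^ 2 - φ y i ^ 2)| := by rw [he]
      _ ≤ ∑ i, |φ x i ^ 2 - φ y i ^ 2| := Finset.abs_sum_le_sum_abs _ _
      _ ≤ ∑ _i : Fin n, 2 * R * (L : ℝ) * |x - y| := by
          apply Finset.sum_le_sum
          intro i _
          have he2 : φ x i ^ 2 - φ y i ^ 2 = (φ x i + φ y i) * (φ x i - φ y i) := by ring
          rw [he2, abs_mul]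
          have h1 : |φ x i + φ y i| ≤ 2 * R :=
            (abs_add_le _ _).trans (by linarith [hcoordBdd i x hx, hcoordBdd i y hy])
          have h2 := hcoordLip i x hx y hy
          calc |φ x i + φ y i| * |φ x i - φ y i| ≤ (2 * R) * ((L : ℝ) * |x - y|) :=
                mul_le_mul h1 h2 (abs_nonneg _) (by positivity)
            _ = 2 * R * (L : ℝ) * |x - y| := by ring
      _ = (n : ℝ) * (2 * R * L) * |x - y| := by
          rw [Finset.sum_const, Finset.card_univ, Fintype.card_fin, nsmul_eq_mul]
          ring
  have hgBdd : ∀ x ∈ Icc s t, |g x| ≤ (n : ℝ) * R ^ 2 := by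
    intro x hx
    have hgnn : 0 ≤ g x := Finset.sum_nonneg fun i _ => sq_nonneg _
    rw [abs_of_nonneg hgnn, hg]
    calc ∑ i, φ x i ^ 2 ≤ ∑ _i : Fin n, R ^ 2 := by
          apply Finset.sum_le_sum
          intro i _
          rw [← sq_abs]
          exact pow_le_pow_left₀ (abs_nonneg _) (hcoordBdd i x hx) 2
      _ = (n : ℝ) * R ^ 2 := by
          rw [Finset.sum_const, Finset.card_univ, Fintype.card_fin, nsmul_eq_mul]
  -- M is Lipschitz and bounded
  have hMsub : ∀ x y : ℝ, M x - M y = ∫ u in y..x, fb u := fun x y =>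
    intervalIntegral.integral_interval_sub_left (hfb_int s x) (hfb_int s y)
  have hMLip : ∀ x y : ℝ, |M x - M y| ≤ Cb * |x - y| := by
    intro x y
    rw [hMsub]
    have h1 := intervalIntegral.norm_integral_le_of_norm_le_const
      (C := Cb) (a := y) (b := x) (f := fb)
      (fun u _ => by rw [Real.norm_eq_abs]; exact hfb_bdd u)
    rwa [Real.norm_eq_abs] at h1
  have hMs : M s = 0 := intervalIntegral.integral_same
  have hMBdd : ∀ x ∈ Icc s t, |M x| ≤ Cb * (t - s) := by
    intro x hx
    have h1 := hMLip x s
    rw [hMs] at h1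
    have h2 : |x - s| ≤ t - s := by
      rw [abs_of_nonneg (sub_nonneg.mpr hx.1)]
      linarith [hx.2]
    calc |M x| = |M x - 0| := by rw [sub_zero]
      _ ≤ Cb * |x - s| := h1
      _ ≤ Cb * (t - s) := mul_le_mul_of_nonneg_left h2 hCb0
  -- E is Lipschitz and bounded
  set m : ℝ := 2 * (Cb * (t - s)) with hm
  have hm0 : 0 ≤ m := by positivity
  have hargle : ∀ x ∈ Icc s t, -2 * M x ≤ m := by
    intro x hx
    have := hMBdd x hx
    rw [abs_le] at this
    rw [hm]; linarith [this.1]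
  have hEBdd : ∀ x ∈ Icc s t, |E x| ≤ Real.exp m := by
    intro x hx
    rw [hE, abs_of_pos (Real.exp_pos _)]
    exact Real.exp_le_exp.mpr (hargle x hx)
  have hELip : ∀ x ∈ Icc s t, ∀ y ∈ Icc s t,
      |E x - E y| ≤ (Real.exp m * (2 * Cb)) * |x - y| := by
    intro x hx y hy
    rw [hE]
    calc |Real.exp (-2 * M x) - Real.exp (-2 * M y)|
        ≤ Real.exp m * |(-2 * M x) - (-2 * M y)| :=
          abs_exp_sub_exp_le (hargle x hx) (hargle y hy)
      _ = Real.exp m * (2 * |M x - M y|) := by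
          rw [show (-2 * M x) - (-2 * M y) = -2 * (M x - M y) by ring, abs_mul]
          norm_num
      _ ≤ Real.exp m * (2 * (Cb * |x - y|)) := by
          have := hMLip x y
          gcongr
      _ = (Real.exp m * (2 * Cb)) * |x - y| := by ring
  -- the product g * E is Lipschitz on [s,t]
  set K : ℝ := (n : ℝ) * (2 * R * L) * Real.exp m + (Real.exp m * (2 * Cb)) * ((n : ℝ) * R ^ 2)
    with hK
  have hK0 : 0 ≤ K := by positivity
  have hfLip : LipschitzOnWith (Real.toNNReal K) (fun τ => g τ * E τ) (Icc s t) := by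
    apply LipschitzOnWith.of_dist_le_mul
    intro x hx y hy
    rw [Real.dist_eq, Real.dist_eq, Real.coe_toNNReal _ hK0]
    have he : g x * E x - g y * E y = (g x - g y) * E x + g y * (E x - E y) := by ring
    calc |g x * E x - g y * E y| ≤ |g x - g y| * |E x| + |g y| * |E x - E y| := by
          rw [he]
          exact (abs_add_le _ _).trans (by rw [abs_mul, abs_mul])
      _ ≤ ((n : ℝ) * (2 * R * L) * |x - y|) * Real.exp m
            + ((n : ℝ) * R ^ 2) * ((Real.exp m * (2 * Cb)) * |x - y|) := by
          apply add_le_add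
          · exact mul_le_mul (hgLip x hx y hy) (hEBdd x hx) (abs_nonneg _)
              (by positivity)
          · exact mul_le_mul (hgBdd y hy) (hELip x hx y hy) (abs_nonneg _)
              (by positivity)
      _ = K * |x - y| := by rw [hK]; ring
  -- the a.e. differential inequality
  have hODE' : ∀ᵐ τ ∂(volume : Measure ℝ), τ ∈ Ioi T →
      HasDerivAt φ ((B τ).mulVec (φ τ)) τ :=
    (ae_restrict_iff' measurableSet_Ioi).mp hODE
  have hMd : ∀ᵐ τ ∂(volume : Measure ℝ), HasDerivAt M (fb τ) τ :=
    Waz4.ae_hasDerivAt_integral hfb_meas hfb_bdd s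
  have hd : ∀ᵐ x ∂(volume : Measure ℝ), x ∈ Ioo s t →
      ∃ d, HasDerivAt (fun τ => g τ * E τ) d x ∧ d ≤ 0 := by
    filter_upwards [hODE', hMd] with τ h1 h2 hmem
    have hτT : τ ∈ Ioi T := lt_trans hTs hmem.1
    have hφd := h1 hτT
    have hcoord : ∀ i, HasDerivAt (fun x => φ x i) ((B τ).mulVec (φ τ) i) τ :=
      hasDerivAt_pi.mp hφd
    have hgd : HasDerivAt g (∑ i, 2 * φ τ i * (B τ).mulVec (φ τ) i) τ := by
      rw [hg]
      apply HasDerivAt.fun_sum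
      intro i _
      have := (hcoord i).fun_pow 2
      simpa using this
    have hMd2 : HasDerivAt (fun x => -2 * M x) (-2 * fb τ) τ := h2.const_mul (-2)
    have hEd : HasDerivAt E (Real.exp (-2 * M τ) * (-2 * fb τ)) τ := hMd2.exp
    have hprod := hgd.mul hEd
    refine ⟨_, hprod, ?_⟩
    have hfbτ : fb τ = mu (B τ) := indicator_of_mem hτT _
    have hq : ∑ i, φ τ i * (B τ).mulVec (φ τ) i ≤ mu (B τ) * g τ := by
      rw [hg]
      exact Waz3.sum_quad_le_mu (B τ) (φ τ)
    have hsum : (∑ i, 2 * φ τ i * (B τ).mulVec (φ τ) i)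
        = 2 * ∑ i, φ τ i * (B τ).mulVec (φ τ) i := by
      rw [Finset.mul_sum]
      exact Finset.sum_congr rfl fun i _ => by ring
    have hEpos : (0:ℝ) < Real.exp (-2 * M τ) := Real.exp_pos _
    rw [hsum, hfbτ]
    have hkey : 0 ≤ Real.exp (-2 * M τ) *
        (mu (B τ) * g τ - ∑ i, φ τ i * (B τ).mulVec (φ τ) i) :=
      mul_nonneg hEpos.le (sub_nonneg.mpr hq)
    nlinarith [hkey]
  -- apply the FTC-based monotonicity lemma
  have hmain : g t * E t ≤ g s * E s :=
    Waz5.le_of_lipschitzOnWith_ae_deriv_nonpos hst hfLip hd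
  -- unfold everything
  have hEs : E s = 1 := by rw [hE]; simp [hMs]
  set I : ℝ := ∫ τ in s..t, mu (B τ) with hI
  have hMt : M t = I := by
    rw [hM, hI]
    apply intervalIntegral.integral_congr
    intro u hu
    rw [uIcc_of_le hst] at hu
    exact indicator_of_mem (hsub hu) _
  have hgsnn : 0 ≤ g s := Finset.sum_nonneg fun i _ => sq_nonneg _
  have hgt : g t ≤ g s * Real.exp (2 * I) := by
    have h1 : g t * Real.exp (-2 * I) ≤ g s := by
      have := hmain
      rw [hEs, mul_one, hE] at this
      simpa [hMt] using this
    calc g t = g t * Real.exp (-2 * I) * Real.exp (2 * I) := by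
          rw [mul_assoc, ← Real.exp_add]
          norm_num
      _ ≤ g s * Real.exp (2 * I) := mul_le_mul_of_nonneg_right h1 (Real.exp_pos _).le
  have hfinal : Real.sqrt (g t) ≤ Real.sqrt (g s) * Real.exp I := by
    have h1 : Real.sqrt (g t) ≤ Real.sqrt (g s * Real.exp (2 * I)) :=
      Real.sqrt_le_sqrt hgt
    have h2 : Real.sqrt (g s * Real.exp (2 * I)) = Real.sqrt (g s) * Real.exp I := by
      rw [Real.sqrt_mul hgsnn]
      congr 1
      rw [show (2:ℝ) * I = I + I by ring, Real.exp_add,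
        Real.sqrt_mul_self (Real.exp_pos I).le]
    rw [h2] at h1
    exact h1
  exact hfinal
end
end

section
/- Let B : (T,∞) → ℝ^{n×n} be a bounded measurable matrix-valued function such that ∫_T^t μ(B(τ)) dτ → −∞ as t → ∞, where μ(B) is the largest eigenvalue of (B + Bᵗ)/2. Then every solution φ of the linear system dφ/dt = B(t)φ tends to zero as t → ∞; that is, the null solution is asymptotically stable and all solutions have limit 0. -/
open MeasureTheory Set Filter
open scoped Topology

noncomputable section

section AuxLemmas
open Matrix
variable {n : ℕ}

lemma symm_isHermitian (A : Matrix (Fin n) (Fin n) ℝ) :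
    ((2:ℝ)⁻¹ • (A + A.transpose)).IsHermitian := by
  unfold Matrix.IsHermitian
  ext i j
  simp [Matrix.conjTranspose_apply, Matrix.transpose_apply, Matrix.smul_apply, Matrix.add_apply]
  ring

lemma dot_eq_inner (v w : Fin n → ℝ) :
    (inner ℝ ((WithLp.equiv 2 (Fin n → ℝ)).symm v) ((WithLp.equiv 2 (Fin n → ℝ)).symm w) : ℝ)
      = ∑ i, v i * w i := by
  rw [PiLp.inner_apply]
  simp [mul_comm]

lemma dot_symm (A : Matrix (Fin n) (Fin n) ℝ) (v : Fin n → ℝ) :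
    ∑ i, v i * ((((2:ℝ)⁻¹ • (A + A.transpose)) *ᵥ v) i) = ∑ i, v i * ((A *ᵥ v) i) := by
  have h1 : ∀ M : Matrix (Fin n) (Fin n) ℝ, ∀ i, (M *ᵥ v) i = ∑ j, M i j * v j := by
    intro M i; rfl
  simp only [h1, Matrix.smul_apply, Matrix.add_apply, Matrix.transpose_apply, smul_eq_mul]
  have swap : ∑ i, ∑ j, v i * (A j i * v j) = ∑ i, ∑ j, v i * (A i j * v j) := by
    rw [Finset.sum_comm]
    congr 1; ext i; congr 1; ext j; ring
  calc ∑ i, v i * (∑ j, 2⁻¹ * (A i j + A j i) * v j)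
      = 2⁻¹ * ((∑ i, ∑ j, v i * (A i j * v j)) + ∑ i, ∑ j, v i * (A j i * v j)) := by
        simp only [Finset.mul_sum]; rw [← Finset.sum_add_distrib]
        rw [Finset.mul_sum]
        congr 1; ext i
        rw [← Finset.sum_add_distrib, Finset.mul_sum]
        congr 1; ext j; ring
    _ = ∑ i, ∑ j, v i * (A i j * v j) := by rw [swap]; ring
    _ = ∑ i, v i * (∑ j, A i j * v j) := by simp only [Finset.mul_sum]

lemma eigen_iff (S : Matrix (Fin n) (Fin n) ℝ) (c : ℝ) :
    Module.End.HasEigenvalue (Matrix.toLin' S) c ↔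
      ∃ v : Fin n → ℝ, v ≠ 0 ∧ S *ᵥ v = c • v := by
  rw [Module.End.hasEigenvalue_iff, Submodule.ne_bot_iff]
  constructor
  · rintro ⟨v, hv, hv0⟩
    exact ⟨v, hv0, by simpa [Matrix.toLin'_apply] using Module.End.mem_eigenspace_iff.1 hv⟩
  · rintro ⟨v, hv0, hv⟩
    exact ⟨v, Module.End.mem_eigenspace_iff.2 (by simpa [Matrix.toLin'_apply] using hv), hv0⟩

lemma mu_facts (hn : 0 < n) (A : Matrix (Fin n) (Fin n) ℝ) :
    (∀ v : Fin n → ℝ, ∑ i, v i * ((A *ᵥ v) i) ≤ mu A * ∑ i, v i ^ 2) ∧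
    (∃ v : Fin n → ℝ, (∑ i, v i ^ 2) = 1 ∧ ∑ i, v i * ((A *ᵥ v) i) = mu A) := by
  haveI : Nonempty (Fin n) := Fin.pos_iff_nonempty.mp hn
  set S : Matrix (Fin n) (Fin n) ℝ := (2:ℝ)⁻¹ • (A + A.transpose) with hSdef
  have hS : S.IsHermitian := symm_isHermitian A
  set lam := hS.eigenvalues with hlam
  set b := hS.eigenvectorBasis with hb
  set lmax := Finset.univ.sup' Finset.univ_nonempty lam with hlmax
  -- quadratic form bound in EuclideanSpace
  have hsymm := (Matrix.isHermitian_iff_isSymmetric.mp hS)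
  have hTb : ∀ i, Matrix.toEuclideanLin S (b i) = lam i • b i := by
    intro i
    have := hS.mulVec_eigenvectorBasis i
    apply (WithLp.equiv 2 (Fin n → ℝ)).injective
    simpa [Matrix.ofLp_toEuclideanLin_apply, Matrix.toLin'_apply] using this
  have quad : ∀ x : EuclideanSpace ℝ (Fin n),
      (inner ℝ x (Matrix.toEuclideanLin S x) : ℝ) ≤ lmax * inner ℝ x x := by
    intro x
    have h1 : (inner ℝ x (Matrix.toEuclideanLin S x) : ℝ)
        = ∑ i, lam i * (inner ℝ x (b i) : ℝ) ^ 2 := by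
      rw [← OrthonormalBasis.sum_inner_mul_inner b x (Matrix.toEuclideanLin S x)]
      congr 1; ext i
      have : (inner ℝ (b i) (Matrix.toEuclideanLin S x) : ℝ)
          = lam i * inner ℝ x (b i) := by
        rw [← hsymm (b i) x, hTb i, real_inner_smul_left, real_inner_comm]
      rw [this]; ring
    have h2 : (inner ℝ x x : ℝ) = ∑ i, (inner ℝ x (b i) : ℝ) ^ 2 := by
      rw [← OrthonormalBasis.sum_inner_mul_inner b x x]
      congr 1; ext i
      rw [real_inner_comm x (b i)]; ring
    rw [h1, h2, Finset.mul_sum]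
    apply Finset.sum_le_sum
    intro i _
    have hsq : (0:ℝ) ≤ (inner ℝ x (b i) : ℝ) ^ 2 := sq_nonneg _
    exact mul_le_mul_of_nonneg_right (Finset.le_sup' lam (Finset.mem_univ i)) hsq
  have quadv : ∀ v : Fin n → ℝ, ∑ i, v i * ((S *ᵥ v) i) ≤ lmax * ∑ i, v i ^ 2 := by
    intro v
    have h : (inner ℝ ((WithLp.equiv 2 (Fin n → ℝ)).symm v)
            ((WithLp.equiv 2 (Fin n → ℝ)).symm (S *ᵥ v)) : ℝ)
        ≤ lmax * inner ℝ ((WithLp.equiv 2 (Fin n → ℝ)).symm v)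
            ((WithLp.equiv 2 (Fin n → ℝ)).symm v) := quad ((WithLp.equiv 2 (Fin n → ℝ)).symm v)
    calc ∑ i, v i * (S *ᵥ v) i
        = (inner ℝ ((WithLp.equiv 2 (Fin n → ℝ)).symm v)
            ((WithLp.equiv 2 (Fin n → ℝ)).symm (S *ᵥ v)) : ℝ) := (dot_eq_inner _ _).symm
      _ ≤ lmax * inner ℝ ((WithLp.equiv 2 (Fin n → ℝ)).symm v)
            ((WithLp.equiv 2 (Fin n → ℝ)).symm v) := h
      _ = lmax * ∑ i, v i ^ 2 := by
          rw [dot_eq_inner]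
          congr 1
          exact Finset.sum_congr rfl fun i _ => (sq (v i)).symm
  -- each lam i is an eigenvalue
  have hmem : ∀ i, Module.End.HasEigenvalue (Matrix.toLin' S) (lam i) := by
    intro i
    rw [eigen_iff]
    refine ⟨⇑(b i), ?_, hS.mulVec_eigenvectorBasis i⟩
    intro h
    exact b.orthonormal.ne_zero i ((WithLp.ofLp_eq_zero (p := 2)).mp h)
  -- eigenvalues are bounded by lmax
  have hub : ∀ c ∈ {c : ℝ | Module.End.HasEigenvalue (Matrix.toLin' S) c}, c ≤ lmax := by
    intro c hc
    obtain ⟨v, hv0, hv⟩ := (eigen_iff S c).mp hc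
    have hpos : 0 < ∑ i, v i ^ 2 := by
      obtain ⟨i, hi⟩ := Function.ne_iff.mp hv0
      exact Finset.sum_pos' (fun j _ => sq_nonneg _)
        ⟨i, Finset.mem_univ i, lt_of_le_of_ne (sq_nonneg _) (Ne.symm (pow_ne_zero 2 hi))⟩
    have h1 : ∑ i, v i * ((S *ᵥ v) i) = c * ∑ i, v i ^ 2 := by
      rw [hv, Finset.mul_sum]
      exact Finset.sum_congr rfl fun i _ => by simp [Pi.smul_apply]; ring
    have := quadv v
    rw [h1] at this
    exact le_of_mul_le_mul_right (by linarith [this]) hpos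
  obtain ⟨i₀, _, hi₀⟩ := Finset.exists_mem_eq_sup' (Finset.univ_nonempty) lam
  have hgr : IsGreatest {c : ℝ | Module.End.HasEigenvalue (Matrix.toLin' S) c} lmax := by
    refine ⟨?_, hub⟩
    show Module.End.HasEigenvalue (Matrix.toLin' S) lmax
    rw [hlmax, hi₀]; exact hmem i₀
  have hmu : mu A = lmax := by
    have : mu A = sSup {c : ℝ | Module.End.HasEigenvalue (Matrix.toLin' S) c} := rfl
    rw [this, hgr.csSup_eq]
  constructor
  · intro v
    rw [hmu, ← dot_symm A v]
    exact quadv v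
  · have h1 : ∑ i, (⇑(b i₀) : Fin n → ℝ) i * (⇑(b i₀) : Fin n → ℝ) i = 1 := by
      have h := dot_eq_inner (n := n) ⇑(b i₀) ⇑(b i₀)
      rw [show ((WithLp.equiv 2 (Fin n → ℝ)).symm ⇑(b i₀)) = b i₀ from rfl] at h
      rw [← h, real_inner_self_eq_norm_sq, b.orthonormal.1 i₀]; norm_num
    refine ⟨⇑(b i₀), by simpa [sq] using h1, ?_⟩
    have hv := hS.mulVec_eigenvectorBasis i₀
    rw [← dot_symm A ⇑(b i₀)]
    have hstep : ∑ i, (⇑(b i₀) : Fin n → ℝ) i * ((S *ᵥ ⇑(b i₀)) i) = lam i₀ := by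
      rw [hv]
      simp only [Pi.smul_apply, smul_eq_mul]
      calc ∑ i, (⇑(b i₀) : Fin n → ℝ) i * (lam i₀ * (⇑(b i₀) : Fin n → ℝ) i)
          = lam i₀ * ∑ i, (⇑(b i₀) : Fin n → ℝ) i * (⇑(b i₀) : Fin n → ℝ) i := by
            rw [Finset.mul_sum]; exact Finset.sum_congr rfl fun i _ => by ring
        _ = lam i₀ := by rw [h1, mul_one]
    rw [hstep, hmu, hlmax, hi₀]


lemma sum_abs_sq_le (v : Fin n → ℝ) : (∑ i, |v i|) ^ 2 ≤ n * ∑ i, v i ^ 2 := by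
  have h := sq_sum_le_card_mul_sum_sq (s := (Finset.univ : Finset (Fin n))) (f := fun i => |v i|)
  simpa [sq_abs] using h

lemma dot_abs_bound (M : Matrix (Fin n) (Fin n) ℝ) (v : Fin n → ℝ) (δ : ℝ)
    (hδ : ∀ i j, |M i j| ≤ δ) : |∑ i, v i * ((M *ᵥ v) i)| ≤ δ * (∑ i, |v i|) ^ 2 := by
  calc |∑ i, v i * ((M *ᵥ v) i)| ≤ ∑ i, |v i * ((M *ᵥ v) i)| := Finset.abs_sum_le_sum_abs _ _
    _ ≤ ∑ i, |v i| * (δ * ∑ j, |v j|) := by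
        apply Finset.sum_le_sum; intro i _
        rw [abs_mul]
        refine mul_le_mul_of_nonneg_left ?_ (abs_nonneg _)
        calc |(M *ᵥ v) i| = |∑ j, M i j * v j| := rfl
          _ ≤ ∑ j, |M i j * v j| := Finset.abs_sum_le_sum_abs _ _
          _ ≤ ∑ j, δ * |v j| := by
              apply Finset.sum_le_sum; intro j _
              rw [abs_mul]; exact mul_le_mul_of_nonneg_right (hδ i j) (abs_nonneg _)
          _ = δ * ∑ j, |v j| := by rw [Finset.mul_sum]
    _ = δ * (∑ i, |v i|) ^ 2 := by rw [← Finset.sum_mul]; ring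


lemma mu_le_add (hn : 0 < n) (A A' : Matrix (Fin n) (Fin n) ℝ) (δ : ℝ)
    (hδ : ∀ i j, |A i j - A' i j| ≤ δ) : mu A ≤ mu A' + n * δ := by
  obtain ⟨-, v, hv1, hv2⟩ := mu_facts hn A
  obtain ⟨hquad', -⟩ := mu_facts hn A'
  have hδ0 : 0 ≤ δ := le_trans (abs_nonneg _) (hδ ⟨0, hn⟩ ⟨0, hn⟩)
  have split : ∑ i, v i * ((A *ᵥ v) i)
      = ∑ i, v i * ((A' *ᵥ v) i) + ∑ i, v i * (((A - A') *ᵥ v) i) := by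
    rw [← Finset.sum_add_distrib]
    refine Finset.sum_congr rfl fun i _ => ?_
    have h : A *ᵥ v = A' *ᵥ v + (A - A') *ᵥ v := by
      rw [← Matrix.add_mulVec, add_sub_cancel]
    rw [h, Pi.add_apply]; ring
  have h1 := hquad' v
  rw [hv1, mul_one] at h1
  have h2 := (abs_le.mp (dot_abs_bound (A - A') v δ (fun i j => by
    simpa [Matrix.sub_apply] using hδ i j))).2
  have h3 : (∑ i, |v i|) ^ 2 ≤ n := by simpa [hv1] using sum_abs_sq_le v
  nlinarith [mul_le_mul_of_nonneg_left h3 hδ0]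

lemma mu_abs_le (hn : 0 < n) (A : Matrix (Fin n) (Fin n) ℝ) (C : ℝ)
    (hC : ∀ i j, |A i j| ≤ C) : |mu A| ≤ n * C := by
  obtain ⟨-, v, hv1, hv2⟩ := mu_facts hn A
  have hC0 : 0 ≤ C := le_trans (abs_nonneg _) (hC ⟨0, hn⟩ ⟨0, hn⟩)
  have h2 := dot_abs_bound A v C hC
  have h3 : (∑ i, |v i|) ^ 2 ≤ n := by simpa [hv1] using sum_abs_sq_le v
  rw [hv2] at h2
  nlinarith [mul_le_mul_of_nonneg_left h3 hC0, abs_nonneg (mu A)]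

lemma mu_measurable (hn : 0 < n) (B : ℝ → Matrix (Fin n) (Fin n) ℝ)
    (hB : ∀ i j, Measurable fun t => B t i j) : Measurable fun t => mu (B t) := by
  have hlip : LipschitzWith n (fun p : Fin n → Fin n → ℝ => mu (Matrix.of p)) := by
    apply LipschitzWith.of_dist_le_mul
    intro p q
    rw [Real.dist_eq, NNReal.coe_natCast]
    have hpq : ∀ i j, |Matrix.of p i j - Matrix.of q i j| ≤ dist p q := by
      intro i j
      calc |p i j - q i j| = dist (p i j) (q i j) := (Real.dist_eq _ _).symm
        _ ≤ dist (p i) (q i) := dist_le_pi_dist (p i) (q i) j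
        _ ≤ dist p q := dist_le_pi_dist p q i
    have hqp : ∀ i j, |Matrix.of q i j - Matrix.of p i j| ≤ dist p q := by
      intro i j; rw [abs_sub_comm]; exact hpq i j
    rw [abs_le]
    constructor
    · have := mu_le_add hn (Matrix.of q) (Matrix.of p) (dist p q) hqp
      linarith
    · have := mu_le_add hn (Matrix.of p) (Matrix.of q) (dist p q) hpq
      linarith
  have hmeas : Measurable fun t => (fun i j => B t i j) :=
    measurable_pi_lambda _ fun i => measurable_pi_lambda _ fun j => hB i j
  exact (hlip.continuous.measurable).comp hmeas

lemma intervalIntegrable_of_bounded {g : ℝ → ℝ} (hg : Measurable g) {K : ℝ}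
    (hK : ∀ t, |g t| ≤ K) (a b : ℝ) : IntervalIntegrable g volume a b := by
  constructor <;>
  · apply Measure.integrableOn_of_bounded (measure_Ioc_lt_top).ne
      hg.aestronglyMeasurable
    filter_upwards with t using by simpa [Real.norm_eq_abs] using hK t

lemma ae_hasDerivAt_primitive {g : ℝ → ℝ} (hg : Measurable g) {K : ℝ}
    (hK : ∀ t, |g t| ≤ K) (T : ℝ) :
    ∀ᵐ x, HasDerivAt (fun t => ∫ τ in T..t, g τ) (g x) x := by
  set M : ℝ → ℝ := fun t => ∫ τ in T..t, g τ with hM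
  have hii : ∀ a b : ℝ, IntervalIntegrable g volume a b :=
    intervalIntegrable_of_bounded hg hK
  have hloc : LocallyIntegrable g volume := by
    rw [locallyIntegrable_iff]
    intro k hk
    apply Measure.integrableOn_of_bounded hk.measure_lt_top.ne hg.aestronglyMeasurable
    filter_upwards with t using by simpa [Real.norm_eq_abs] using hK t
  have hvit := (IsUnifLocDoublingMeasure.vitaliFamily (volume : Measure ℝ) 1).ae_tendsto_average hloc
  filter_upwards [hvit] with x hx
  have hMsub : ∀ s t : ℝ, M t - M s = ∫ τ in s..t, g τ := by
    intro s t
    rw [hM]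
    exact intervalIntegral.integral_interval_sub_left (hii T t) (hii T s)
  have havg : ∀ s t : ℝ, s < t → ⨍ τ in Icc s t, g τ = (∫ τ in s..t, g τ) / (t - s) := by
    intro s t hst
    rw [setAverage_eq, intervalIntegral.integral_of_le hst.le,
      ← integral_Icc_eq_integral_Ioc, Real.volume_real_Icc_of_le hst.le,
      smul_eq_mul, div_eq_inv_mul]
  have hr : Tendsto (slope M x) (𝓝[>] x) (𝓝 (g x)) := by
    apply Tendsto.congr' _ (hx.comp (Real.tendsto_Icc_vitaliFamily_right x))
    filter_upwards [self_mem_nhdsWithin] with y (hy : x < y)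
    simp only [Function.comp_apply]
    rw [havg x y hy, slope_def_field, hMsub x y]
  have hl : Tendsto (slope M x) (𝓝[<] x) (𝓝 (g x)) := by
    apply Tendsto.congr' _ (hx.comp (Real.tendsto_Icc_vitaliFamily_left x))
    filter_upwards [self_mem_nhdsWithin] with y (hy : y < x)
    simp only [Function.comp_apply]
    rw [havg y x hy, slope_def_field, hMsub x y, intervalIntegral.integral_symm y x]
    have h0 : y - x ≠ 0 := by linarith
    have h0' : x - y ≠ 0 := by linarith
    field_simp
    ring
  rw [hasDerivAt_iff_tendsto_slope, ← nhdsLT_sup_nhdsGT x, tendsto_sup]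
  exact ⟨hl, hr⟩

lemma slope_seq_lim (F : ℝ → ℝ) (t c : ℝ) (hF : HasDerivAt F c t) :
    Tendsto (fun k : ℕ => (F (t + ((k : ℝ) + 1)⁻¹) - F t) / ((k : ℝ) + 1)⁻¹)
      atTop (𝓝 c) := by
  have h1 := hasDerivAt_iff_tendsto_slope.mp hF
  have h2 : Tendsto (fun k : ℕ => t + ((k : ℝ) + 1)⁻¹) atTop (𝓝[≠] t) := by
    apply tendsto_nhdsWithin_of_tendsto_nhds_of_eventually_within
    · have h3 : Tendsto (fun k : ℕ => ((k : ℝ) + 1)⁻¹) atTop (𝓝 0) := by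
        simpa [one_div] using tendsto_one_div_add_atTop_nhds_zero_nat (𝕜 := ℝ)
      simpa using tendsto_const_nhds.add h3
    · filter_upwards with k
      have h4 : (0:ℝ) < ((k : ℝ) + 1)⁻¹ := by positivity
      simp only [mem_compl_iff, mem_singleton_iff]
      intro h
      have := add_eq_left.mp h
      linarith
  have h5 := h1.comp h2
  apply h5.congr
  intro k
  simp only [Function.comp_apply, slope_def_field]
  rw [add_sub_cancel_left]

lemma lip_nonincreasing (f d : ℝ → ℝ) (L : NNReal) (hf : LipschitzWith L f)
    {a b : ℝ} (hab : a ≤ b)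
    (hd : AEStronglyMeasurable d (volume.restrict (Ioc a b)))
    (hder : ∀ᵐ t ∂(volume.restrict (Ioc a b)), HasDerivAt f (d t) t ∧ d t ≤ 0) :
    f b ≤ f a := by
  rcases eq_or_lt_of_le hab with rfl | hab'
  · exact le_refl _
  set e : ℕ → ℝ := fun k => ((k : ℝ) + 1)⁻¹ with he
  have he0 : ∀ k, 0 < e k := fun k => by positivity
  set q : ℕ → ℝ → ℝ := fun k t => (f (t + e k) - f t) / e k with hq
  have hfc : Continuous f := hf.continuous
  -- Step A : DCT
  have stepA : Tendsto (fun k => ∫ t in Ioc a b, q k t) atTop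
      (𝓝 (∫ t in Ioc a b, d t)) := by
    apply tendsto_integral_of_dominated_convergence (fun _ => (L : ℝ))
    · intro k
      exact ((hfc.comp (continuous_id.add continuous_const)).sub hfc).div_const
        (e k) |>.aestronglyMeasurable
    · exact integrable_const _
    · intro k
      filter_upwards with t
      rw [Real.norm_eq_abs, hq, abs_div, abs_of_pos (he0 k), div_le_iff₀ (he0 k)]
      have := hf.dist_le_mul (t + e k) t
      rw [Real.dist_eq, Real.dist_eq] at this
      simpa [abs_of_pos (he0 k)] using this
    · filter_upwards [hder] with t ht
      exact slope_seq_lim f t (d t) ht.1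
  -- Step B : the integrals converge to f b - f a
  have hiif : ∀ s u : ℝ, IntervalIntegrable f volume s u := fun s u =>
    hfc.intervalIntegrable s u
  set F : ℝ → ℝ := fun s => ∫ x in a..s, f x with hF
  have hFd : ∀ s : ℝ, HasDerivAt F (f s) s := by
    intro s
    exact intervalIntegral.integral_hasDerivAt_right (hiif a s)
      (hfc.stronglyMeasurableAtFilter _ _) hfc.continuousAt
  have key : ∀ k, ∫ t in Ioc a b, q k t
      = (F (b + e k) - F b) / e k - (F (a + e k) - F a) / e k := by
    intro k
    rw [← intervalIntegral.integral_of_le hab]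
    have h1 : ∫ t in a..b, q k t
        = (∫ t in a..b, (f (t + e k) - f t)) / e k := by
      rw [hq, intervalIntegral.integral_div]
    have hia : IntervalIntegrable (fun t : ℝ => f (t + e k)) volume a b :=
      Continuous.intervalIntegrable (by fun_prop) a b
    rw [h1, intervalIntegral.integral_sub hia (hiif a b)]
    have h2 : ∫ t in a..b, f (t + e k) = ∫ t in (a + e k)..(b + e k), f t :=
      intervalIntegral.integral_comp_add_right f (e k)
    have h3 : ∫ t in (a + e k)..(b + e k), f t = F (b + e k) - F (a + e k) := by
      rw [hF]
      rw [← intervalIntegral.integral_interval_sub_left (hiif a (b + e k))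
        (hiif a (a + e k))]
    have h4 : ∫ t in a..b, f t = F b - F a := by
      rw [hF]
      simp
    rw [h2, h3, h4]
    ring
  have stepB : Tendsto (fun k => ∫ t in Ioc a b, q k t) atTop (𝓝 (f b - f a)) := by
    have hB := (slope_seq_lim F b (f b) (hFd b)).sub (slope_seq_lim F a (f a) (hFd a))
    apply hB.congr
    intro k
    rw [key k]
  -- combine
  have heq : f b - f a = ∫ t in Ioc a b, d t := tendsto_nhds_unique stepB stepA
  have hneg : ∫ t in Ioc a b, d t ≤ 0 := by
    apply integral_nonpos_of_ae
    filter_upwards [hder] with t ht using ht.2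
  linarith

lemma lipOn_mul {f g : ℝ → ℝ} {s : Set ℝ} {Kf Kg Af Ag : ℝ}
    (hf : ∀ x ∈ s, ∀ y ∈ s, |f x - f y| ≤ Kf * |x - y|)
    (hg : ∀ x ∈ s, ∀ y ∈ s, |g x - g y| ≤ Kg * |x - y|)
    (hAf : ∀ x ∈ s, |f x| ≤ Af) (hAg : ∀ x ∈ s, |g x| ≤ Ag) :
    ∀ x ∈ s, ∀ y ∈ s, |f x * g x - f y * g y| ≤ (Kf * Ag + Kg * Af) * |x - y| := by
  intro x hx y hy
  have hr : f x * g x - f y * g y = (f x - f y) * g x + f y * (g x - g y) := by ring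
  have hAf0 : 0 ≤ Af := le_trans (abs_nonneg _) (hAf x hx)
  have hKf0 : 0 ≤ Kf * |x - y| := le_trans (abs_nonneg _) (hf x hx y hy)
  calc |f x * g x - f y * g y| ≤ |f x - f y| * |g x| + |f y| * |g x - g y| := by
        rw [hr]
        exact (abs_add_le _ _).trans (by rw [abs_mul, abs_mul])
    _ ≤ (Kf * |x - y|) * Ag + Af * (Kg * |x - y|) :=
        add_le_add (mul_le_mul (hf x hx y hy) (hAg x hx) (abs_nonneg _) hKf0)
          (mul_le_mul (hAf y hy) (hg x hx y hy) (abs_nonneg _) hAf0)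
    _ = (Kf * Ag + Kg * Af) * |x - y| := by ring

lemma exp_lip {u v c : ℝ} (hu : u ≤ c) (hv : v ≤ c) :
    |Real.exp u - Real.exp v| ≤ Real.exp c * |u - v| := by
  have key : ∀ p q : ℝ, q ≤ p → p ≤ c → Real.exp p - Real.exp q ≤ Real.exp c * (p - q) := by
    intro p q hqp hpc
    have h1 : 1 - (p - q) ≤ Real.exp (-(p - q)) := by
      have := Real.add_one_le_exp (-(p - q))
      linarith
    have h2 : Real.exp p * (1 - (p - q)) ≤ Real.exp p * Real.exp (-(p - q)) :=
      mul_le_mul_of_nonneg_left h1 (Real.exp_pos p).le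
    rw [← Real.exp_add] at h2
    have h3 : p + -(p - q) = q := by ring
    rw [h3] at h2
    have h4 : Real.exp p ≤ Real.exp c := Real.exp_le_exp.mpr hpc
    nlinarith [Real.exp_pos p, sub_nonneg.mpr hqp]
  rcases le_total v u with h | h
  · rw [abs_of_nonneg (sub_nonneg.mpr (Real.exp_le_exp.mpr h)), abs_of_nonneg (sub_nonneg.mpr h)]
    exact key u v h hu
  · rw [abs_of_nonpos (sub_nonpos.mpr (Real.exp_le_exp.mpr h)), abs_of_nonpos (sub_nonpos.mpr h),
      neg_sub, neg_sub]
    exact key v u h hv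


end AuxLemmas

/-- **Asymptotic stability criterion (proof of Corollary 3).** If `B` is bounded measurable on
`(T,∞)` and `∫_T^t μ(B(τ)) dτ → −∞` as `t → ∞`, then every (Lipschitz, a.e.) solution `φ` of
`dφ/dt = B(t)φ` tends to zero as `t → ∞`. -/
theorem tendsto_zero_of_mu_integral_tendsto_atBot
    (n : ℕ) (T : ℝ)
    (B : ℝ → Matrix (Fin n) (Fin n) ℝ)
    (hB_meas : ∀ i j, Measurable fun t => B t i j)
    (hB_bdd : ∃ C : ℝ, ∀ t ∈ Ioi T, ∀ i j, |B t i j| ≤ C)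
    (hmu : Tendsto (fun t => ∫ τ in T..t, mu (B τ)) atTop atBot) :
    ∀ φ : ℝ → Fin n → ℝ, IsAESol n T B φ →
      Tendsto (fun t => euclNorm (φ t)) atTop (𝓝 0) := by
  intro φ hsol
  obtain ⟨⟨L, hL⟩, hode⟩ := hsol
  rcases Nat.eq_zero_or_pos n with rfl | hn
  · simpa [euclNorm] using (tendsto_const_nhds : Tendsto (fun _ : ℝ => (0:ℝ)) atTop (𝓝 0))
  obtain ⟨C, hC⟩ := hB_bdd
  -- the pointwise Lipschitz estimate for φ
  have hLp : ∀ x ∈ Ioi T, ∀ y ∈ Ioi T, dist (φ x) (φ y) ≤ L * dist x y :=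
    lipschitzOnWith_iff_dist_le_mul.mp hL
  have hLpi : ∀ i, ∀ x ∈ Ioi T, ∀ y ∈ Ioi T, |φ x i - φ y i| ≤ L * |x - y| := by
    intro i x hx y hy
    calc |φ x i - φ y i| = dist (φ x i) (φ y i) := (Real.dist_eq _ _).symm
      _ ≤ dist (φ x) (φ y) := dist_le_pi_dist _ _ i
      _ ≤ L * dist x y := hLp x hx y hy
      _ = L * |x - y| := by rw [Real.dist_eq]
  -- the function g = μ(B t) cut off outside (T, ∞)
  set g : ℝ → ℝ := (Ioi T).indicator (fun t => mu (B t)) with hg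
  have hgmeas : Measurable g :=
    (mu_measurable hn B hB_meas).indicator measurableSet_Ioi
  set K : ℝ := max ((n : ℝ) * C) 0 with hK
  have hK0 : 0 ≤ K := le_max_right _ _
  have hgK : ∀ t, |g t| ≤ K := by
    intro t
    rw [hg]
    by_cases ht : t ∈ Ioi T
    · rw [indicator_of_mem ht]
      exact le_trans (mu_abs_le hn (B t) C (hC t ht)) (le_max_left _ _)
    · rw [indicator_of_notMem ht]
      simpa using hK0
  have hgmu : ∀ t ∈ Ioi T, g t = mu (B t) := fun t ht => indicator_of_mem ht _
  -- the primitive M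
  set M : ℝ → ℝ := fun t => ∫ τ in T..t, g τ with hM
  have hMae : ∀ᵐ x, HasDerivAt M (g x) x := ae_hasDerivAt_primitive hgmeas hgK T
  have hgii : ∀ s u : ℝ, IntervalIntegrable g volume s u :=
    intervalIntegrable_of_bounded hgmeas hgK
  have hMlip : ∀ x y : ℝ, |M x - M y| ≤ K * |x - y| := by
    intro x y
    have h1 : M x - M y = ∫ τ in y..x, g τ :=
      intervalIntegral.integral_interval_sub_left (hgii T x) (hgii T y)
    rw [h1]
    have := intervalIntegral.norm_integral_le_of_norm_le_const
      (C := K) (f := g) (a := y) (b := x) (fun u _ => by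
        rw [Real.norm_eq_abs]; exact hgK u)
    rw [Real.norm_eq_abs] at this
    exact this
  have hMcont : Continuous M := by
    apply LipschitzWith.continuous (K := Real.toNNReal K)
    apply LipschitzWith.of_dist_le_mul
    intro x y
    rw [Real.dist_eq, Real.dist_eq]
    exact le_trans (hMlip x y) (by
      gcongr
      exact le_max_left _ _)
  -- M tends to -∞
  have hMtend : Tendsto M atTop atBot := by
    apply hmu.congr'
    filter_upwards [eventually_ge_atTop T] with t ht
    apply intervalIntegral.integral_congr_ae
    filter_upwards with x hx
    rw [uIoc_of_le ht] at hx
    exact (hgmu x hx.1).symm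
  -- notation
  set a : ℝ := T + 1 with ha
  have haT : a ∈ Ioi T := mem_Ioi.mpr (by rw [ha]; linarith)
  set ψ : ℝ → ℝ := fun t => ∑ i, φ t i ^ 2 with hψ
  set E : ℝ → ℝ := fun t => Real.exp (-2 * M t) with hE
  set G : ℝ → ℝ := fun t => ψ t * E t with hG
  have hψ0 : ∀ t, 0 ≤ ψ t := fun t => Finset.sum_nonneg fun i _ => sq_nonneg _
  -- the Gronwall-type estimate
  have gron : ∀ b : ℝ, a ≤ b → G b ≤ G a := by
    intro b hb
    set b' : ℝ := b + 1 with hb'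
    have hab' : a ≤ b' := by linarith
    have hbb' : b < b' := by linarith
    set s : Set ℝ := Icc a b' with hs
    have hsub : s ⊆ Ioi T := fun t ht => by
      rw [mem_Ioi]; have := ht.1; rw [ha] at this; linarith
    have hbs : b ∈ s := ⟨hb, by linarith⟩
    have has : a ∈ s := ⟨le_refl _, hab'⟩
    -- bound for φ on s
    set Cφ : ℝ := (∑ j, |φ a j|) + L * (b' - a) with hCφ
    have hCφ0 : 0 ≤ Cφ := add_nonneg (Finset.sum_nonneg fun j _ => abs_nonneg _)
      (mul_nonneg L.coe_nonneg (by linarith))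
    have hφb : ∀ t ∈ s, ∀ i, |φ t i| ≤ Cφ := by
      intro t ht i
      have h1 : |φ t i - φ a i| ≤ L * |t - a| := hLpi i t (hsub ht) a haT
      have h2 : |t - a| ≤ b' - a := by
        rw [abs_le]; constructor <;> [linarith [ht.1]; linarith [ht.2]]
      have h3 : |φ a i| ≤ ∑ j, |φ a j| :=
        Finset.single_le_sum (fun j _ => abs_nonneg (φ a j)) (Finset.mem_univ i)
      have h4 : |φ t i| ≤ |φ a i| + |φ t i - φ a i| := by
        calc |φ t i| = |φ a i + (φ t i - φ a i)| := by ring_nf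
          _ ≤ |φ a i| + |φ t i - φ a i| := abs_add_le _ _
      have h5 : (L : ℝ) * |t - a| ≤ L * (b' - a) :=
        mul_le_mul_of_nonneg_left h2 L.coe_nonneg
      rw [hCφ]; linarith
    -- ψ is Lipschitz and bounded on s
    set Lψ : ℝ := n * (2 * Cφ * L) with hLψ
    have hψlip : ∀ x ∈ s, ∀ y ∈ s, |ψ x - ψ y| ≤ Lψ * |x - y| := by
      intro x hx y hy
      calc |ψ x - ψ y| = |∑ i, (φ x i ^ 2 - φ y i ^ 2)| := by
            rw [hψ, Finset.sum_sub_distrib]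
        _ ≤ ∑ i, |φ x i ^ 2 - φ y i ^ 2| := Finset.abs_sum_le_sum_abs _ _
        _ ≤ ∑ i : Fin n, 2 * Cφ * L * |x - y| := by
            apply Finset.sum_le_sum
            intro i _
            have h1 : φ x i ^ 2 - φ y i ^ 2 = (φ x i - φ y i) * (φ x i + φ y i) := by ring
            rw [h1, abs_mul]
            have h2 : |φ x i + φ y i| ≤ 2 * Cφ := by
              calc |φ x i + φ y i| ≤ |φ x i| + |φ y i| := abs_add_le _ _
                _ ≤ 2 * Cφ := by linarith [hφb x hx i, hφb y hy i]
            calc |φ x i - φ y i| * |φ x i + φ y i|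
                ≤ (L * |x - y|) * (2 * Cφ) := mul_le_mul
                  (hLpi i x (hsub hx) y (hsub hy)) h2 (abs_nonneg _)
                  (mul_nonneg L.coe_nonneg (abs_nonneg _))
              _ = 2 * Cφ * L * |x - y| := by ring
        _ = Lψ * |x - y| := by
            rw [Finset.sum_const, Finset.card_univ, Fintype.card_fin, nsmul_eq_mul, hLψ]
            ring
    have hψbd : ∀ t ∈ s, |ψ t| ≤ n * Cφ ^ 2 := by
      intro t ht
      rw [abs_of_nonneg (hψ0 t), hψ]
      calc ∑ i, φ t i ^ 2 ≤ ∑ i : Fin n, Cφ ^ 2 := by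
            apply Finset.sum_le_sum
            intro i _
            have := hφb t ht i
            nlinarith [abs_nonneg (φ t i), neg_abs_le (φ t i), le_abs_self (φ t i)]
        _ = n * Cφ ^ 2 := by
            rw [Finset.sum_const, Finset.card_univ, Fintype.card_fin, nsmul_eq_mul]
    -- E is Lipschitz and bounded on s
    set cM : ℝ := 2 * (|M a| + K * (b' - a)) with hcM
    have hMbd : ∀ t ∈ s, |(-2 : ℝ) * M t| ≤ cM := by
      intro t ht
      have h1 : |M t - M a| ≤ K * |t - a| := hMlip t a
      have h2 : |t - a| ≤ b' - a := by
        rw [abs_le]; constructor <;> [linarith [ht.1]; linarith [ht.2]]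
      have h3 : K * |t - a| ≤ K * (b' - a) := mul_le_mul_of_nonneg_left h2 hK0
      have h4 : |M t| ≤ |M a| + K * (b' - a) := by
        calc |M t| = |M a + (M t - M a)| := by ring_nf
          _ ≤ |M a| + |M t - M a| := abs_add_le _ _
          _ ≤ |M a| + K * (b' - a) := by linarith
      rw [abs_mul, hcM]
      have : |(-2 : ℝ)| = 2 := by norm_num
      rw [this]; linarith
    set LE : ℝ := Real.exp cM * (2 * K) with hLE
    have hElip : ∀ x ∈ s, ∀ y ∈ s, |E x - E y| ≤ LE * |x - y| := by
      intro x hx y hy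
      have h1 : (-2 : ℝ) * M x ≤ cM := le_trans (le_abs_self _) (hMbd x hx)
      have h2 : (-2 : ℝ) * M y ≤ cM := le_trans (le_abs_self _) (hMbd y hy)
      calc |E x - E y| ≤ Real.exp cM * |(-2) * M x - (-2) * M y| := exp_lip h1 h2
        _ = Real.exp cM * (2 * |M x - M y|) := by
            rw [show (-2 : ℝ) * M x - (-2) * M y = (-2) * (M x - M y) by ring, abs_mul]
            norm_num
        _ ≤ Real.exp cM * (2 * (K * |x - y|)) := by
            have := hMlip x y
            have h3 : (0:ℝ) ≤ Real.exp cM := (Real.exp_pos cM).le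
            nlinarith
        _ = LE * |x - y| := by rw [hLE]; ring
    have hEbd : ∀ t ∈ s, |E t| ≤ Real.exp cM := by
      intro t ht
      rw [hE, abs_of_pos (Real.exp_pos _)]
      exact Real.exp_le_exp.mpr (le_trans (le_abs_self _) (hMbd t ht))
    -- G is Lipschitz on s
    set CG : ℝ := Lψ * Real.exp cM + LE * (n * Cφ ^ 2) with hCG
    have hGlip : ∀ x ∈ s, ∀ y ∈ s, |G x - G y| ≤ CG * |x - y| :=
      lipOn_mul hψlip hElip hψbd hEbd
    have hLψ0 : 0 ≤ Lψ := by
      rw [hLψ]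
      exact mul_nonneg (Nat.cast_nonneg n)
        (mul_nonneg (mul_nonneg (by norm_num) hCφ0) L.coe_nonneg)
    have hLE0 : 0 ≤ LE := by
      rw [hLE]
      exact mul_nonneg (Real.exp_pos _).le (by positivity)
    have hCG0 : 0 ≤ CG := by
      rw [hCG]
      exact add_nonneg (mul_nonneg hLψ0 (Real.exp_pos _).le)
        (mul_nonneg hLE0 (mul_nonneg (Nat.cast_nonneg n) (sq_nonneg _)))
    -- clamp to s
    set ρ : ℝ → ℝ := fun t => max a (min t b') with hρdef
    have hρmem : ∀ x, ρ x ∈ s := by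
      intro x
      refine ⟨le_max_left _ _, max_le hab' (le_trans (min_le_right _ _) (le_refl _))⟩
    have hρid : ∀ x ∈ s, ρ x = x := by
      intro x hx
      rw [hρdef]
      simp only
      rw [min_eq_left hx.2, max_eq_right hx.1]
    have hρlip : ∀ x y, |ρ x - ρ y| ≤ |x - y| := by
      intro x y
      rw [hρdef]
      simp only
      rw [max_comm a (min x b'), max_comm a (min y b')]
      refine le_trans (abs_max_sub_max_le_abs _ _ _) ?_
      refine le_trans (abs_min_sub_min_le_max _ _ _ _) ?_
      simp
    set Gc : ℝ → ℝ := fun t => G (ρ t) with hGc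
    have hGclip : LipschitzWith (Real.toNNReal CG) Gc := by
      apply LipschitzWith.of_dist_le_mul
      intro x y
      rw [Real.dist_eq, Real.dist_eq, hGc]
      simp only
      calc |G (ρ x) - G (ρ y)| ≤ CG * |ρ x - ρ y| := hGlip _ (hρmem x) _ (hρmem y)
        _ ≤ CG * |x - y| := mul_le_mul_of_nonneg_left (hρlip x y) hCG0
        _ ≤ (Real.toNNReal CG : ℝ) * |x - y| := by
            refine mul_le_mul_of_nonneg_right ?_ (abs_nonneg _)
            rw [Real.coe_toNNReal']
            exact le_max_left _ _
    -- the candidate derivative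
    set d : ℝ → ℝ := fun t =>
      (∑ i, 2 * φ t i * ((B t).mulVec (φ t)) i) * E t + ψ t * (E t * (-2 * g t)) with hd
    -- measurability of d on Ioc a b
    have hφaesm : ∀ i, AEStronglyMeasurable (fun t => φ t i)
        (volume.restrict (Ioc a b)) := by
      intro i
      have h1 : ContinuousOn (fun t => φ t i) (Ioi T) :=
        (continuous_apply i).comp_continuousOn hL.continuousOn
      exact (h1.mono (fun t ht => mem_Ioi.mpr (by
        have := ht.1; rw [ha] at this; linarith))).aestronglyMeasurable measurableSet_Ioc
    have hdmeas : AEStronglyMeasurable d (volume.restrict (Ioc a b)) := by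
      rw [hd]
      apply AEMeasurable.aestronglyMeasurable
      have hφae : ∀ i, AEMeasurable (fun t => φ t i) (volume.restrict (Ioc a b)) :=
        fun i => ((hφaesm i).aemeasurable)
      have hBφ : ∀ i, AEMeasurable (fun t => ((B t).mulVec (φ t)) i)
          (volume.restrict (Ioc a b)) := by
        intro i
        have : (fun t => ((B t).mulVec (φ t)) i)
            = fun t => ∑ j, B t i j * φ t j := rfl
        rw [this]
        exact Finset.aemeasurable_fun_sum _ fun j _ =>
          ((hB_meas i j).aemeasurable.mono_measure Measure.restrict_le_self).mul (hφae j)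
      have hEae : AEMeasurable E (volume.restrict (Ioc a b)) :=
        ((Real.continuous_exp.comp (continuous_const.mul hMcont)).measurable).aemeasurable
      have hgae : AEMeasurable g (volume.restrict (Ioc a b)) := hgmeas.aemeasurable
      have hψae : AEMeasurable ψ (volume.restrict (Ioc a b)) :=
        Finset.aemeasurable_fun_sum _ fun i _ => ((hφae i).pow_const 2)
      exact ((Finset.aemeasurable_fun_sum _ fun i _ =>
        ((aemeasurable_const.mul (hφae i)).mul (hBφ i))).mul hEae).add
        (hψae.mul (hEae.mul (aemeasurable_const.mul hgae)))
    -- a.e. derivative of Gc with value d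
    have hodeIoc : ∀ᵐ t ∂(volume.restrict (Ioc a b)),
        HasDerivAt φ ((B t).mulVec (φ t)) t := by
      apply ae_restrict_of_ae_restrict_of_subset _ hode
      intro t ht
      exact mem_Ioi.mpr (by have := ht.1; rw [ha] at this; linarith)
    have hMIoc : ∀ᵐ t ∂(volume.restrict (Ioc a b)), HasDerivAt M (g t) t :=
      ae_restrict_of_ae hMae
    have hmemIoc : ∀ᵐ t ∂(volume.restrict (Ioc a b)), t ∈ Ioc a b :=
      ae_restrict_mem measurableSet_Ioc
    have hder : ∀ᵐ t ∂(volume.restrict (Ioc a b)),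
        HasDerivAt Gc (d t) t ∧ d t ≤ 0 := by
      filter_upwards [hodeIoc, hMIoc, hmemIoc] with t hφt hMt ht
      have htIoi : t ∈ Ioi T := mem_Ioi.mpr (by have := ht.1; rw [ha] at this; linarith)
      -- derivative of ψ
      have hψd : HasDerivAt ψ (∑ i, 2 * φ t i * ((B t).mulVec (φ t)) i) t := by
        rw [hψ]
        apply HasDerivAt.fun_sum
        intro i _
        have h1 : HasDerivAt (fun u => φ u i) (((B t).mulVec (φ t)) i) t :=
          hasDerivAt_pi.mp hφt i
        have h2 := h1.fun_pow 2
        simpa using h2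
      -- derivative of E
      have hEd : HasDerivAt E (E t * (-2 * g t)) t := by
        rw [hE]
        have h1 : HasDerivAt (fun u => -2 * M u) (-2 * g t) t := hMt.const_mul (-2)
        simpa [hE] using h1.exp
      have hGd : HasDerivAt G (d t) t := by
        rw [hG, hd]
        exact hψd.mul hEd
      constructor
      · -- transfer to Gc via local equality
        apply hGd.congr_of_eventuallyEq
        have hnb : Ioo a b' ∈ 𝓝 t := Ioo_mem_nhds ht.1 (lt_of_le_of_lt ht.2 hbb')
        filter_upwards [hnb] with u hu
        rw [hGc]
        simp only
        rw [hρid u ⟨hu.1.le, hu.2.le⟩]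
      · -- the differential inequality
        have hquad := (mu_facts hn (B t)).1 (φ t)
        have hgt : g t = mu (B t) := hgmu t htIoi
        have hEpos : 0 < E t := Real.exp_pos _
        have h1 : ∑ i, 2 * φ t i * ((B t).mulVec (φ t)) i
            = 2 * ∑ i, φ t i * ((B t).mulVec (φ t)) i := by
          rw [Finset.mul_sum]
          exact Finset.sum_congr rfl fun i _ => by ring
        rw [hd]
        simp only
        rw [h1]
        have h2 : ∑ i, φ t i * ((B t).mulVec (φ t)) i ≤ g t * ψ t := by
          rw [hgt, hψ]
          exact hquad
        nlinarith [hψ0 t]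
    -- apply the main comparison lemma
    have hfin := lip_nonincreasing Gc d (Real.toNNReal CG) hGclip hb hdmeas hder
    rw [hGc] at hfin
    simp only at hfin
    rwa [hρid b hbs, hρid a has] at hfin
  -- final squeeze
  have key : ∀ b, a ≤ b → euclNorm (φ b) ≤ Real.sqrt (ψ a) * Real.exp (M b - M a) := by
    intro b hb
    have h1 := gron b hb
    rw [hG] at h1
    simp only at h1
    rw [hE] at h1
    have hψble : ψ b ≤ ψ a * Real.exp (2 * (M b - M a)) := by
      calc ψ b = ψ b * Real.exp (-2 * M b) * Real.exp (2 * M b) := by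
            rw [mul_assoc, ← Real.exp_add, show (-2) * M b + 2 * M b = 0 by ring,
              Real.exp_zero, mul_one]
        _ ≤ ψ a * Real.exp (-2 * M a) * Real.exp (2 * M b) :=
            mul_le_mul_of_nonneg_right h1 (Real.exp_pos _).le
        _ = ψ a * Real.exp (2 * (M b - M a)) := by
            rw [mul_assoc, ← Real.exp_add, show (-2) * M a + 2 * M b = 2 * (M b - M a) by ring]
    calc euclNorm (φ b) = Real.sqrt (ψ b) := by rw [euclNorm, hψ]
      _ ≤ Real.sqrt (ψ a * Real.exp (2 * (M b - M a))) := Real.sqrt_le_sqrt hψble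
      _ = Real.sqrt (ψ a) * Real.sqrt (Real.exp (2 * (M b - M a))) := Real.sqrt_mul (hψ0 a) _
      _ = Real.sqrt (ψ a) * Real.exp (M b - M a) := by
          congr 1
          rw [show 2 * (M b - M a) = (M b - M a) + (M b - M a) by ring, Real.exp_add,
            Real.sqrt_mul_self (Real.exp_pos _).le]
  have hβ : Tendsto (fun b => Real.sqrt (ψ a) * Real.exp (M b - M a)) atTop (𝓝 0) := by
    have h1 : Tendsto (fun b => M b - M a) atTop atBot :=
      tendsto_atBot_add_const_right _ _ hMtend
    have h2 := (Real.tendsto_exp_atBot).comp h1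
    have h3 := h2.const_mul (Real.sqrt (ψ a))
    simpa using h3
  apply squeeze_zero' ?_ ?_ hβ
  · filter_upwards with t
    exact Real.sqrt_nonneg _
  · filter_upwards [eventually_ge_atTop a] with t ht
    exact key t ht
end
end

section
/- Let R̃ : (T,∞) → ℝ^{n×n} be a bounded measurable matrix-valued function such that the improper integral S(t) := ∫_t^∞ R̃(τ) dτ converges (perhaps not absolutely) for each t > T, with S(t) → 0 as t → ∞, and such that the function t ↦ R̃(t) S(t) belongs to L¹(T′,∞) for T′ sufficiently large. Then the linear system dφ/dt + R̃(t)φ = 0 is uniformly stable and every solution is asymptotically constant: each solution φ satisfies φ(t) → φ_∞ for some φ_∞ ∈ ℝⁿ as t → ∞. -/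
open MeasureTheory Set Filter
open scoped Topology
open scoped Interval

noncomputable section

/-- The (operator) norm of a matrix, with respect to the Euclidean norm. -/
def matNorm {n : ℕ} (M : Matrix (Fin n) (Fin n) ℝ) : ℝ :=
  sSup {c : ℝ | ∃ v : Fin n → ℝ, euclNorm v ≤ 1 ∧ c = euclNorm (M.mulVec v)}

/-- `φ` is a solution of the linear system `dφ/dt + M(t) φ = 0` on `(T, ∞)`. -/
def IsLinSol (n : ℕ) (T : ℝ) (M : ℝ → Matrix (Fin n) (Fin n) ℝ)
    (φ : ℝ → Fin n → ℝ) : Prop :=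
  ContinuousOn φ (Ioi T) ∧ ∀ s ∈ Ioi T, ∀ t ∈ Ioi T,
    φ t = φ s - ∫ τ in s..t, (M τ).mulVec (φ τ)

/-- The linear system `dφ/dt + M(t) φ = 0` is uniformly stable on `(T, ∞)`. -/
def UnifStable (n : ℕ) (T : ℝ) (M : ℝ → Matrix (Fin n) (Fin n) ℝ) : Prop :=
  ∀ ε > (0 : ℝ), ∃ δ > (0 : ℝ), ∀ φ : ℝ → Fin n → ℝ, IsLinSol n T M φ →
    ∀ t₁ ∈ Ioi T, euclNorm (φ t₁) < δ → ∀ t ≥ t₁, euclNorm (φ t) < ε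

lemma euclNorm_eq {n : ℕ} (v : Fin n → ℝ) :
    euclNorm v = ‖(WithLp.equiv 2 (Fin n → ℝ)).symm v‖ := by
  rw [EuclideanSpace.norm_eq, euclNorm]
  congr 1; apply Finset.sum_congr rfl; intro i _
  rw [Real.norm_eq_abs, sq_abs]; rfl

lemma abs_apply_le_norm {n : ℕ} (x : EuclideanSpace ℝ (Fin n)) (j : Fin n) : |x j| ≤ ‖x‖ := by
  rw [EuclideanSpace.norm_eq, ← Real.sqrt_sq_eq_abs]
  apply Real.sqrt_le_sqrt
  have := Finset.single_le_sum (f := fun i => (x i)^2) (fun i _ => sq_nonneg _)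
    (Finset.mem_univ j)
  simpa [Real.norm_eq_abs, sq_abs] using this

lemma matNorm_eq {n : ℕ} (M : Matrix (Fin n) (Fin n) ℝ) :
    matNorm M = ‖Matrix.toEuclideanCLM (𝕜 := ℝ) M‖ := by
  rw [← ContinuousLinearMap.sSup_unitClosedBall_eq_norm, matNorm]
  congr 1
  ext c
  constructor
  · rintro ⟨v, hv, rfl⟩
    refine ⟨(WithLp.equiv 2 (Fin n → ℝ)).symm v, ?_, ?_⟩
    · rw [Metric.mem_closedBall, dist_zero_right]; rw [euclNorm_eq] at hv; exact hv
    · show ‖Matrix.toEuclideanCLM (𝕜 := ℝ) M ((WithLp.equiv 2 (Fin n → ℝ)).symm v)‖ =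
        euclNorm (M.mulVec v)
      rw [euclNorm_eq]; rfl
  · rintro ⟨x, hx, rfl⟩
    refine ⟨WithLp.equiv 2 (Fin n → ℝ) x, ?_, ?_⟩
    · rw [euclNorm_eq, Equiv.symm_apply_apply]
      rwa [Metric.mem_closedBall, dist_zero_right] at hx
    · show ‖Matrix.toEuclideanCLM (𝕜 := ℝ) M x‖ = euclNorm (M.mulVec (WithLp.equiv 2 _ x))
      conv_lhs => rw [show x = (WithLp.equiv 2 (Fin n → ℝ)).symm (WithLp.equiv 2 _ x) from
        (Equiv.symm_apply_apply _ _).symm]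
      rw [euclNorm_eq]; rfl

lemma norm_le_l1 {n : ℕ} (y : EuclideanSpace ℝ (Fin n)) : ‖y‖ ≤ ∑ i, |y i| := by
  rw [EuclideanSpace.norm_eq]
  have h2 : (∑ i, ‖y i‖^2) ≤ (∑ i, |y i|)^2 := by
    simp only [Real.norm_eq_abs]
    calc ∑ i, |y i|^2 ≤ ∑ i, |y i| * ∑ k, |y k| := by
          apply Finset.sum_le_sum
          intro i _
          rw [sq]
          exact mul_le_mul_of_nonneg_left
            (Finset.single_le_sum (f := fun k => |y k|) (fun k _ => abs_nonneg _)
              (Finset.mem_univ i)) (abs_nonneg _)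
      _ = (∑ i, |y i|)^2 := by rw [← Finset.sum_mul, sq]
  calc Real.sqrt (∑ i, ‖y i‖^2) ≤ Real.sqrt ((∑ i, |y i|)^2) := Real.sqrt_le_sqrt h2
    _ = ∑ i, |y i| := Real.sqrt_sq (by positivity)

lemma clm_norm_le_sum {n : ℕ} (M : Matrix (Fin n) (Fin n) ℝ) :
    ‖Matrix.toEuclideanCLM (𝕜 := ℝ) M‖ ≤ ∑ i, ∑ j, |M i j| := by
  apply ContinuousLinearMap.opNorm_le_bound _ (by positivity)
  intro x
  calc ‖Matrix.toEuclideanCLM (𝕜 := ℝ) M x‖ ≤ ∑ i, |(Matrix.toEuclideanCLM (𝕜 := ℝ) M x) i| :=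
        norm_le_l1 _
    _ ≤ ∑ i, ∑ j, |M i j| * ‖x‖ := by
        apply Finset.sum_le_sum
        intro i _
        have : (Matrix.toEuclideanCLM (𝕜 := ℝ) M x) i = ∑ j, M i j * x j := rfl
        rw [this]
        calc |∑ j, M i j * x j| ≤ ∑ j, |M i j * x j| := Finset.abs_sum_le_sum_abs _ _
          _ ≤ ∑ j, |M i j| * ‖x‖ := by
              apply Finset.sum_le_sum
              intro j _
              rw [abs_mul]
              exact mul_le_mul_of_nonneg_left (abs_apply_le_norm x j) (abs_nonneg _)
    _ = (∑ i, ∑ j, |M i j|) * ‖x‖ := by rw [Finset.sum_mul]; congr 1; ext i; rw [Finset.sum_mul]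


/-- Assemble an `EuclideanSpace`-valued a.e. strongly measurable function from coordinates. -/
lemma aesm_euclid {n : ℕ} {f : ℝ → EuclideanSpace ℝ (Fin n)} {μ : Measure ℝ}
    (h : ∀ i, AEMeasurable (fun τ => f τ i) μ) : AEStronglyMeasurable f μ := by
  have hp : AEMeasurable (fun τ => (fun i => f τ i : Fin n → ℝ)) μ := by
    choose g hg hge using h
    refine ⟨fun τ i => g i τ, measurable_pi_lambda _ hg, ?_⟩
    have : ∀ᵐ τ ∂μ, ∀ i, f τ i = g i τ := ae_all_iff.2 hge
    filter_upwards [this] with τ hτ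
    funext i; exact hτ i
  exact ((EuclideanSpace.equiv (Fin n) ℝ).symm.continuous.comp_aestronglyMeasurable
    hp.aestronglyMeasurable)


lemma aesm_pi {n : ℕ} {f : ℝ → (Fin n → ℝ)} {μ : Measure ℝ}
    (h : ∀ i, AEMeasurable (fun τ => f τ i) μ) : AEStronglyMeasurable f μ := by
  have hp : AEMeasurable f μ := by
    choose g hg hge using h
    refine ⟨fun τ i => g i τ, measurable_pi_lambda _ hg, ?_⟩
    filter_upwards [ae_all_iff.2 hge] with τ hτ
    funext i; exact hτ i
  exact hp.aestronglyMeasurable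

lemma intInt_of_bound {n : ℕ} {f : ℝ → EuclideanSpace ℝ (Fin n)} {u v : ℝ}
    (hm : AEStronglyMeasurable f (volume.restrict (Ι u v))) {Cf : ℝ}
    (hb : ∀ τ ∈ Ι u v, ‖f τ‖ ≤ Cf) : IntervalIntegrable f volume u v := by
  rw [intervalIntegrable_iff]
  refine Integrable.mono' (g := fun _ => Cf) (integrableOn_const measure_Ioc_lt_top.ne) hm ?_
  filter_upwards [ae_restrict_mem measurableSet_uIoc] with τ hτ
  exact hb τ hτ

lemma intInt_scalar_of_bound {f : ℝ → ℝ} {u v : ℝ}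
    (hm : AEMeasurable f (volume.restrict (Ι u v))) {Cf : ℝ}
    (hb : ∀ τ ∈ Ι u v, |f τ| ≤ Cf) : IntervalIntegrable f volume u v := by
  rw [intervalIntegrable_iff]
  refine Integrable.mono' (g := fun _ => Cf) (integrableOn_const measure_Ioc_lt_top.ne)
    hm.aestronglyMeasurable ?_
  filter_upwards [ae_restrict_mem measurableSet_uIoc] with τ hτ
  exact hb τ hτ

/-- basic bootstrap estimate. -/
lemma bootstrap {n : ℕ} {ψ : ℝ → EuclideanSpace ℝ (Fin n)} {g : ℝ → ℝ} {s b : ℝ}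
    (hsb : s ≤ b) (hcont : ContinuousOn ψ (Icc s b))
    (hg_int : IntervalIntegrable g volume s b) (hg_nonneg : ∀ τ ∈ Icc s b, 0 ≤ g τ)
    (hg_small : (∫ τ in s..b, g τ) ≤ 1/2)
    (hineq : ∀ t ∈ Icc s b, ‖ψ t‖ ≤ ‖ψ s‖ + ∫ τ in s..t, g τ * ‖ψ τ‖) :
    ∀ t ∈ Icc s b, ‖ψ t‖ ≤ 2 * ‖ψ s‖ := by
  obtain ⟨c, hc, hmax⟩ := isCompact_Icc.exists_isMaxOn (nonempty_Icc.2 hsb)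
    (continuous_norm.comp_continuousOn hcont)
  have hnc : ∀ t ∈ Icc s b, ‖ψ t‖ ≤ ‖ψ c‖ := fun t ht => hmax ht
  have hsc : s ≤ c := hc.1
  have hgc : IntervalIntegrable g volume s c :=
    hg_int.mono_set (by rw [uIcc_of_le hsc, uIcc_of_le hsb]; exact Icc_subset_Icc le_rfl hc.2)
  have hgψ : IntervalIntegrable (fun τ => g τ * ‖ψ τ‖) volume s c :=
    hgc.mul_continuousOn (by
      rw [uIcc_of_le hsc]
      exact continuous_norm.comp_continuousOn (hcont.mono (Icc_subset_Icc le_rfl hc.2)))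
  have key : ‖ψ c‖ ≤ ‖ψ s‖ + (1/2) * ‖ψ c‖ := by
    have h1 : ‖ψ c‖ ≤ ‖ψ s‖ + ∫ τ in s..c, g τ * ‖ψ τ‖ := hineq c hc
    have h2 : (∫ τ in s..c, g τ * ‖ψ τ‖) ≤ ∫ τ in s..c, g τ * ‖ψ c‖ := by
      apply intervalIntegral.integral_mono_on hsc hgψ (hgc.mul_const _)
      intro x hx
      exact mul_le_mul_of_nonneg_left (hnc x (Icc_subset_Icc le_rfl hc.2 hx))
        (hg_nonneg x (Icc_subset_Icc le_rfl hc.2 hx))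
    have h3 : (∫ τ in s..c, g τ * ‖ψ c‖) = (∫ τ in s..c, g τ) * ‖ψ c‖ :=
      intervalIntegral.integral_mul_const _ _
    have h4 : (∫ τ in s..c, g τ) ≤ ∫ τ in s..b, g τ := by
      have hcb : IntervalIntegrable g volume c b :=
        hg_int.mono_set (by rw [uIcc_of_le hc.2, uIcc_of_le hsb]; exact Icc_subset_Icc hsc le_rfl)
      have := intervalIntegral.integral_add_adjacent_intervals hgc hcb
      have hpos : 0 ≤ ∫ τ in c..b, g τ :=
        intervalIntegral.integral_nonneg hc.2 (fun x hx => hg_nonneg x ⟨hsc.trans hx.1, hx.2⟩)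
      linarith
    have h5 : (∫ τ in s..c, g τ) * ‖ψ c‖ ≤ (1/2) * ‖ψ c‖ :=
      mul_le_mul_of_nonneg_right (h4.trans hg_small) (norm_nonneg _)
    linarith
  have hc2 : ‖ψ c‖ ≤ 2 * ‖ψ s‖ := by linarith
  intro t ht
  exact (hnc t ht).trans hc2

/-- Iterated bootstrap: exponential bound with constant-coefficient control. -/
lemma iter_bound {n : ℕ} {ψ : ℝ → EuclideanSpace ℝ (Fin n)} {T Ca : ℝ} (hCa : 0 ≤ Ca)
    (hcont : ContinuousOn ψ (Ioi T))
    (hineq : ∀ s ∈ Ioi T, ∀ t ∈ Ioi T, s ≤ t →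
      ‖ψ t‖ ≤ ‖ψ s‖ + ∫ τ in s..t, Ca * ‖ψ τ‖) :
    ∀ m : ℕ, ∀ s ∈ Ioi T, ∀ t ∈ Ioi T, s ≤ t → (t - s) * (2 * Ca) ≤ m →
      ‖ψ t‖ ≤ 2 ^ m * ‖ψ s‖ := by
  -- first, a single bootstrap step on an interval with (b - s) * 2 * Ca ≤ 1
  have step : ∀ s ∈ Ioi T, ∀ b ∈ Ioi T, s ≤ b → (b - s) * (2 * Ca) ≤ 1 →
      ‖ψ b‖ ≤ 2 * ‖ψ s‖ := by
    intro s hs b hb hsb hsmall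
    have hIcc : Icc s b ⊆ Ioi T := fun x hx => lt_of_lt_of_le hs hx.1
    refine bootstrap hsb (hcont.mono hIcc) (intervalIntegrable_const) (fun τ _ => hCa) ?_ ?_ b
      ⟨hsb, le_rfl⟩
    · rw [intervalIntegral.integral_const, smul_eq_mul]
      nlinarith
    · intro t ht
      exact hineq s hs t (hIcc ht) ht.1
  intro m
  induction m with
  | zero =>
    intro s hs t ht hst h0
    rcases eq_or_lt_of_le hCa with hCa0 | hCapos
    · have : ‖ψ t‖ ≤ ‖ψ s‖ + ∫ τ in s..t, Ca * ‖ψ τ‖ := hineq s hs t ht hst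
      simp only [← hCa0, zero_mul, intervalIntegral.integral_zero] at this
      simpa using this
    · push_cast at h0
      have hts : t = s := by nlinarith
      simp [hts, one_mul]
  | succ m ih =>
    intro s hs t ht hst hsmall
    rcases le_or_gt ((t - s) * (2 * Ca)) 1 with h1 | h1
    · have := step s hs t ht hst h1
      have h2 : (2:ℝ) * ‖ψ s‖ ≤ 2 ^ (m+1) * ‖ψ s‖ := by
        apply mul_le_mul_of_nonneg_right _ (norm_nonneg _)
        calc (2:ℝ) = 2^1 := (pow_one 2).symm
          _ ≤ 2^(m+1) := by
            apply pow_le_pow_right₀ one_le_two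
            omega
      linarith
    · have hCapos : 0 < Ca := by nlinarith
      set s' := t - 1 / (2 * Ca) with hs'def
      have hss' : s ≤ s' := by
        have : 1 / (2 * Ca) ≤ t - s := by
          rw [div_le_iff₀ (by positivity)]
          linarith
        simp only [hs'def]; linarith
      have hs' : s' ∈ Ioi T := lt_of_lt_of_le hs hss'
      have hs't : s' ≤ t := by
        have : 0 < 1 / (2 * Ca) := by positivity
        simp only [hs'def]; linarith
      have hIH : ‖ψ s'‖ ≤ 2 ^ m * ‖ψ s‖ := by
        apply ih s hs s' hs' hss'
        have : (s' - s) * (2 * Ca) = (t - s) * (2 * Ca) - 1 := by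
          simp only [hs'def]
          field_simp
          ring
        rw [this]
        push_cast at hsmall ⊢
        linarith
      have hstep : ‖ψ t‖ ≤ 2 * ‖ψ s'‖ := by
        apply step s' hs' t ht hs't
        have : (t - s') * (2 * Ca) = 1 := by
          simp only [hs'def]
          field_simp
          ring
        rw [this]
      calc ‖ψ t‖ ≤ 2 * ‖ψ s'‖ := hstep
        _ ≤ 2 * (2 ^ m * ‖ψ s‖) := by linarith
        _ = 2 ^ (m+1) * ‖ψ s‖ := by ring

/-- A function with vanishing tail-oscillation control converges at infinity. -/
lemma tendsto_of_tail_control {X : Type*} [MetricSpace X] [CompleteSpace X]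
    (f : ℝ → X) (h : ℝ → ℝ) (s₀ : ℝ)
    (hh : Tendsto h atTop (𝓝 0))
    (hb : ∀ s t : ℝ, s₀ ≤ s → s ≤ t → dist (f s) (f t) ≤ h s) :
    ∃ L, Tendsto f atTop (𝓝 L) := by
  have hcauchy : CauchySeq (fun k : ℕ => f (s₀ + k)) := by
    refine cauchySeq_of_le_tendsto_0 (fun N => 2 * h (s₀ + N)) ?_ ?_
    · intro i j N hiN hjN
      have hbase : s₀ ≤ s₀ + (N:ℝ) := by linarith [Nat.cast_nonneg (α := ℝ) N]
      have h1 : dist (f (s₀ + i)) (f (s₀ + N)) ≤ h (s₀ + N) := by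
        rw [dist_comm]
        exact hb _ _ hbase (by exact_mod_cast add_le_add_right (Nat.cast_le.2 hiN) s₀)
      have h2 : dist (f (s₀ + N)) (f (s₀ + j)) ≤ h (s₀ + N) := by
        exact hb _ _ hbase (by exact_mod_cast add_le_add_right (Nat.cast_le.2 hjN) s₀)
      calc dist (f (s₀ + i)) (f (s₀ + j)) ≤ _ + _ := dist_triangle _ (f (s₀ + N)) _
        _ ≤ 2 * h (s₀ + N) := by linarith
    · have : Tendsto (fun N : ℕ => s₀ + (N:ℝ)) atTop atTop :=
        tendsto_atTop_add_const_left _ _ tendsto_natCast_atTop_atTop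
      have := hh.comp this
      simpa using this.const_mul 2
  obtain ⟨L, hL⟩ := cauchySeq_tendsto_of_complete hcauchy
  refine ⟨L, ?_⟩
  rw [Metric.tendsto_atTop]
  intro ε hε
  have h3 : Tendsto (fun N : ℕ => h (s₀ + N)) atTop (𝓝 0) :=
    hh.comp (tendsto_atTop_add_const_left _ _ tendsto_natCast_atTop_atTop)
  have h4 : ∀ᶠ N : ℕ in atTop, |h (s₀ + N)| < ε/2 := by
    have h3' : Tendsto (fun N : ℕ => |h (s₀ + N)|) atTop (𝓝 0) := by simpa using h3.abs
    exact h3'.eventually (eventually_lt_nhds (by positivity : (0:ℝ) < ε/2))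
  obtain ⟨N₁, hN₁⟩ := eventually_atTop.1 h4
  obtain ⟨N₂, hN₂⟩ := Metric.tendsto_atTop.1 hL (ε/2) (by positivity)
  set N := max N₁ N₂
  refine ⟨s₀ + N, fun t ht => ?_⟩
  have hbase : s₀ ≤ s₀ + (N:ℝ) := by linarith [Nat.cast_nonneg (α := ℝ) N]
  have hd1 : dist (f (s₀ + N)) (f t) ≤ h (s₀ + N) := hb _ _ hbase ht
  have hd2 : dist (f (s₀ + N)) L < ε/2 := hN₂ N (le_max_right _ _)
  have hd3 : h (s₀ + N) < ε/2 := (le_abs_self _).trans_lt (hN₁ N (le_max_left _ _))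
  have hd1' : dist (f t) (f (s₀ + N)) ≤ h (s₀ + N) := by rw [dist_comm]; exact hd1
  calc dist (f t) L ≤ dist (f t) (f (s₀ + N)) + dist (f (s₀ + N)) L := dist_triangle _ _ _
    _ < ε/2 + ε/2 := add_lt_add_of_le_of_lt (hd1'.trans hd3.le) hd2
    _ = ε := by ring

lemma clm_apply_coord {n : ℕ} (M : Matrix (Fin n) (Fin n) ℝ) (x : EuclideanSpace ℝ (Fin n))
    (i : Fin n) : (Matrix.toEuclideanCLM (𝕜 := ℝ) M x) i = ∑ j, M i j * x j := rfl


set_option maxHeartbeats 1600000 in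
/-- **Dynamical-systems content of Corollary 2.** Suppose `R̃ : (T,∞) → ℝ^{n×n}` is bounded
measurable, the improper integral `S(t) = ∫_t^∞ R̃(τ) dτ` converges (perhaps not absolutely)
for each `t > T` with `S(t) → 0` as `t → ∞`, and `R̃ S ∈ L¹(T′,∞)` for `T′` large. Then
`dφ/dt + R̃(t)φ = 0` is uniformly stable and every solution is asymptotically constant. -/
theorem unifStable_and_asympConst_of_improper_integral
    (n : ℕ) (T : ℝ)
    (Rt : ℝ → Matrix (Fin n) (Fin n) ℝ)
    (hRt_meas : ∀ i j, Measurable fun t => Rt t i j)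
    (hRt_bdd : ∃ C : ℝ, ∀ t ∈ Ioi T, ∀ i j, |Rt t i j| ≤ C)
    (S : ℝ → Matrix (Fin n) (Fin n) ℝ)
    (hS : ∀ t ∈ Ioi T, ∀ i j,
      Tendsto (fun u => ∫ τ in t..u, Rt τ i j) atTop (𝓝 (S t i j)))
    (hS0 : Tendsto (fun t => matNorm (S t)) atTop (𝓝 0))
    (hL1 : ∃ T' ≥ T, IntegrableOn (fun t => matNorm (Rt t * S t)) (Ioi T')) :
    UnifStable n T Rt ∧
      ∀ φ : ℝ → Fin n → ℝ, IsLinSol n T Rt φ →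
        ∃ φinf : Fin n → ℝ, Tendsto φ atTop (𝓝 φinf) := by
  classical
  obtain ⟨C₀, hC₀⟩ := hRt_bdd
  set C := max C₀ 0 with hCdef
  have hC : ∀ t ∈ Ioi T, ∀ i j, |Rt t i j| ≤ C := fun t ht i j =>
    (hC₀ t ht i j).trans (le_max_left _ _)
  have hC0 : 0 ≤ C := le_max_right _ _
  set Ca := (n:ℝ)^2 * C with hCadef
  have hCa : 0 ≤ Ca := by positivity
  set Aop := fun t => Matrix.toEuclideanCLM (𝕜 := ℝ) (Rt t) with hAdef
  set Bop := fun t => Matrix.toEuclideanCLM (𝕜 := ℝ) (S t) with hBdef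
  set q := fun t => matNorm (Rt t * S t) with hqdef
  have hq_eq : ∀ t, q t = ‖Aop t * Bop t‖ := by
    intro t
    simp only [hqdef, hAdef, hBdef]
    rw [matNorm_eq, map_mul]
  have hq0 : ∀ t, 0 ≤ q t := fun t => (hq_eq t) ▸ norm_nonneg _
  -- operator norm bound for A
  have hAnorm : ∀ t ∈ Ioi T, ‖Aop t‖ ≤ Ca := by
    intro t ht
    refine (clm_norm_le_sum (Rt t)).trans ?_
    calc (∑ i, ∑ j, |Rt t i j|) ≤ ∑ _i : Fin n, ∑ _j : Fin n, C :=
          Finset.sum_le_sum (fun i _ => Finset.sum_le_sum (fun j _ => hC t ht i j))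
      _ = (n:ℝ)^2 * C := by
          simp [Finset.sum_const, Finset.card_univ]
          ring
  -- entrywise interval integrability of Rt
  have hentInt : ∀ i j, ∀ u ∈ Ioi T, ∀ v ∈ Ioi T,
      IntervalIntegrable (fun τ => Rt τ i j) volume u v := by
    intro i j u hu v hv
    refine intInt_scalar_of_bound (Cf := C) ((hRt_meas i j).aemeasurable.restrict) ?_
    intro τ hτ
    have : τ ∈ Ioi T := lt_trans (lt_min hu hv) hτ.1
    exact hC τ this i j
  -- difference formula for S
  have hSdiff : ∀ u ∈ Ioi T, ∀ v ∈ Ioi T, ∀ i j,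
      S u i j - S v i j = ∫ τ in u..v, Rt τ i j := by
    intro u hu v hv i j
    have hev : ∀ᶠ w in atTop, (∫ τ in u..w, Rt τ i j) =
        (∫ τ in u..v, Rt τ i j) + ∫ τ in v..w, Rt τ i j := by
      filter_upwards [eventually_ge_atTop (max u v)] with w hw
      have hwT : w ∈ Ioi T := lt_of_lt_of_le hv ((le_max_right u v).trans hw)
      exact (intervalIntegral.integral_add_adjacent_intervals
        (hentInt i j u hu v hv) (hentInt i j v hv w hwT)).symm
    have h1 : Tendsto (fun w => (∫ τ in u..v, Rt τ i j) + ∫ τ in v..w, Rt τ i j)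
        atTop (𝓝 ((∫ τ in u..v, Rt τ i j) + S v i j)) :=
      (hS v hv i j).const_add _
    have h2 : Tendsto (fun w => (∫ τ in u..v, Rt τ i j) + ∫ τ in v..w, Rt τ i j)
        atTop (𝓝 (S u i j)) := (hS u hu i j).congr' hev
    have := tendsto_nhds_unique h2 h1
    linarith
  -- continuity of S entries on (T, ∞)
  have hScont : ∀ i j, ContinuousOn (fun t => S t i j) (Ioi T) := by
    intro i j
    set g : ℝ → ℝ := indicator (Ioi T) (fun τ => Rt τ i j) with hgdef
    have hgmeas : Measurable g := (hRt_meas i j).indicator measurableSet_Ioi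
    have hgint : ∀ a b : ℝ, IntervalIntegrable g volume a b := by
      intro a b
      refine intInt_scalar_of_bound (Cf := C) hgmeas.aemeasurable.restrict ?_
      intro τ _
      rw [hgdef]
      by_cases h : τ ∈ Ioi T
      · rw [indicator_of_mem h]; exact hC τ h i j
      · rw [indicator_of_notMem h]; simpa using hC0
    have hcont := intervalIntegral.continuous_primitive hgint (T+1)
    have hTc : T + 1 ∈ Ioi T := by simp [mem_Ioi]
    have heq : ∀ t ∈ Ioi T, S t i j = S (T+1) i j - ∫ τ in (T+1)..t, g τ := by
      intro t ht
      have h1 := hSdiff t ht (T+1) hTc i j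
      have h2 : (∫ τ in (T+1)..t, g τ) = ∫ τ in (T+1)..t, Rt τ i j := by
        apply intervalIntegral.integral_congr
        intro τ hτ
        have hτT : τ ∈ Ioi T := lt_of_lt_of_le (lt_min (by simp) ht) hτ.1
        rw [hgdef]; exact indicator_of_mem hτT _
      have h3 : (∫ τ in t..(T+1), Rt τ i j) = - ∫ τ in (T+1)..t, Rt τ i j :=
        intervalIntegral.integral_symm _ _
      rw [h2]
      linarith
    exact ((continuous_const.sub hcont).continuousOn).congr heq
  -- Bop is continuous on (T, ∞)
  have htoCLMlin : ∃ L : Matrix (Fin n) (Fin n) ℝ →ₗ[ℝ]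
      (EuclideanSpace ℝ (Fin n) →L[ℝ] EuclideanSpace ℝ (Fin n)),
      ∀ M, L M = Matrix.toEuclideanCLM (𝕜 := ℝ) M := by
    refine ⟨{ toFun := fun M => Matrix.toEuclideanCLM (𝕜 := ℝ) M,
              map_add' := fun M N => map_add _ M N,
              map_smul' := fun c M => map_smul _ c M }, fun M => rfl⟩
  have hScontM : ContinuousOn S (Ioi T) := by
    apply continuousOn_pi.2; intro i; apply continuousOn_pi.2; intro j; exact hScont i j
  have hBcont : ContinuousOn Bop (Ioi T) := by
    obtain ⟨L, hL⟩ := htoCLMlin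
    have hLc : Continuous L := L.continuous_of_finiteDimensional
    have : Bop = fun t => L (S t) := by funext t; rw [hL, hBdef]
    rw [this]
    exact hLc.comp_continuousOn hScontM
  -- Lipschitz bound for B
  have hBlip : ∀ u ∈ Ioi T, ∀ v ∈ Ioi T, u ≤ v → ‖Bop u - Bop v‖ ≤ Ca * (v - u) := by
    intro u hu v hv huv
    have h1 : Bop u - Bop v = Matrix.toEuclideanCLM (𝕜 := ℝ) (S u - S v) := by
      simp only [hBdef]; rw [map_sub]
    rw [h1]
    refine (clm_norm_le_sum _).trans ?_
    have hent : ∀ i j, |(S u - S v) i j| ≤ C * (v - u) := by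
      intro i j
      rw [Matrix.sub_apply, hSdiff u hu v hv i j]
      have hb := intervalIntegral.norm_integral_le_of_norm_le_const (C := C)
        (f := fun τ => Rt τ i j) (a := u) (b := v) (fun x hx =>
          hC x (lt_trans (lt_min hu hv) hx.1) i j)
      rw [Real.norm_eq_abs] at hb
      calc |∫ τ in u..v, Rt τ i j| ≤ C * |v - u| := hb
        _ = C * (v - u) := by rw [abs_of_nonneg (by linarith)]
    calc ∑ i, ∑ j, |(S u - S v) i j| ≤ ∑ _i : Fin n, ∑ _j : Fin n, C * (v - u) :=
          Finset.sum_le_sum (fun i _ => Finset.sum_le_sum (fun j _ => hent i j))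
      _ = Ca * (v - u) := by
          simp [Finset.sum_const, Finset.card_univ, hCadef]
          ring
  -- tail of q
  obtain ⟨T', hT'T, hqInt⟩ := hL1
  have htail : Tendsto (fun u : ℝ => ∫ τ in Ioi u, q τ) atTop (𝓝 0) := by
    have hempty : (⋂ u : ℝ, Ioi u) = (∅ : Set ℝ) := by
      ext x
      simp only [mem_iInter, mem_Ioi, mem_empty_iff_false, iff_false, not_forall, not_lt]
      exact ⟨x, le_rfl⟩
    have h := tendsto_setIntegral_of_antitone (f := q) (μ := volume) (s := fun u : ℝ => Ioi u)
      (fun u => measurableSet_Ioi) (fun a b hab => Ioi_subset_Ioi hab) ⟨T', hqInt⟩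
    rw [hempty] at h
    simpa using h
  -- choose T₀
  have hBn : Tendsto (fun t => ‖Bop t‖) atTop (𝓝 0) := by
    have : (fun t => matNorm (S t)) = fun t => ‖Bop t‖ := by
      funext t; simp only [hBdef]; exact matNorm_eq _
    rwa [this] at hS0
  have hSsmall : ∀ᶠ t in atTop, ‖Bop t‖ ≤ 1/2 :=
    hBn.eventually (eventually_le_nhds (by norm_num : (0:ℝ) < 1/2))
  have hTailsmall : ∀ᶠ u in atTop, (∫ τ in Ioi u, q τ) ≤ 1/8 :=
    htail.eventually (eventually_le_nhds (by norm_num : (0:ℝ) < 1/8))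
  obtain ⟨a₁, ha₁⟩ := eventually_atTop.1 hSsmall
  obtain ⟨a₂, ha₂⟩ := eventually_atTop.1 hTailsmall
  set T₀ := max (max (T+1) (T'+1)) (max a₁ a₂) with hT₀def
  have hT₀T : T < T₀ :=
    lt_of_lt_of_le (lt_add_one T) ((le_max_left _ _).trans (le_max_left _ _))
  have hT₀T' : T' < T₀ :=
    lt_of_lt_of_le (lt_add_one T') ((le_max_right _ _).trans (le_max_left _ _))
  have hT₀mem : T₀ ∈ Ioi T := hT₀T
  have hBhalf : ∀ t, T₀ ≤ t → ‖Bop t‖ ≤ 1/2 := fun t ht =>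
    ha₁ t (((le_max_left a₁ a₂).trans (le_max_right _ _)).trans ht)
  have htail₀ : ∀ u, T₀ ≤ u → (∫ τ in Ioi u, q τ) ≤ 1/8 := fun u hu =>
    ha₂ u (((le_max_right a₁ a₂).trans (le_max_right _ _)).trans hu)
  -- invertibility of 1 + B
  have hUnit : ∀ t, T₀ ≤ t → IsUnit ((1 : EuclideanSpace ℝ (Fin n) →L[ℝ]
      EuclideanSpace ℝ (Fin n)) + Bop t) := by
    intro t ht
    have h1 : (1 : EuclideanSpace ℝ (Fin n) →L[ℝ] EuclideanSpace ℝ (Fin n)) + Bop t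
        = 1 - (-Bop t) := by rw [sub_neg_eq_add]
    rw [h1]
    refine isUnit_one_sub_of_norm_lt_one ?_
    rw [norm_neg]
    linarith [hBhalf t ht]
  set Wop := fun t => Ring.inverse ((1 : EuclideanSpace ℝ (Fin n) →L[ℝ]
      EuclideanSpace ℝ (Fin n)) + Bop t) with hWdef
  have hWmul : ∀ t, T₀ ≤ t → Wop t * (1 + Bop t) = 1 := fun t ht =>
    Ring.inverse_mul_cancel _ (hUnit t ht)
  have hmulW : ∀ t, T₀ ≤ t → (1 + Bop t) * Wop t = 1 := fun t ht =>
    Ring.mul_inverse_cancel _ (hUnit t ht)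
  have hWnorm : ∀ t, T₀ ≤ t → ‖Wop t‖ ≤ 2 := by
    intro t ht
    have h1 : Wop t = 1 - Wop t * Bop t := by
      have h := hWmul t ht
      rw [mul_add, mul_one] at h
      exact (eq_sub_of_add_eq h)
    have h2 : ‖Wop t‖ ≤ ‖(1 : EuclideanSpace ℝ (Fin n) →L[ℝ] EuclideanSpace ℝ (Fin n))‖
        + ‖Wop t * Bop t‖ := by
      conv_lhs => rw [h1]
      exact norm_sub_le _ _
    have h3 : ‖Wop t * Bop t‖ ≤ ‖Wop t‖ * ‖Bop t‖ := norm_mul_le _ _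
    have h4 : ‖(1 : EuclideanSpace ℝ (Fin n) →L[ℝ] EuclideanSpace ℝ (Fin n))‖ ≤ 1 := by
      rw [ContinuousLinearMap.one_def]; exact ContinuousLinearMap.norm_id_le
    nlinarith [hBhalf t ht, norm_nonneg (Wop t), norm_nonneg (Bop t)]
  have hWcont : ContinuousOn Wop (Ici T₀) := by
    have hIci : Ici T₀ ⊆ Ioi T := fun x hx => lt_of_lt_of_le hT₀T hx
    intro t ht
    have h1 : ContinuousWithinAt (fun u => (1 : EuclideanSpace ℝ (Fin n) →L[ℝ]
        EuclideanSpace ℝ (Fin n)) + Bop u) (Ici T₀) t :=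
      continuousWithinAt_const.add ((hBcont.mono hIci) t ht)
    obtain ⟨u, hu⟩ := hUnit t ht
    have h2 : ContinuousAt Ring.inverse ((1 : EuclideanSpace ℝ (Fin n) →L[ℝ]
        EuclideanSpace ℝ (Fin n)) + Bop t) := by
      rw [← hu]
      exact NormedRing.inverse_continuousAt u
    exact Filter.Tendsto.comp h2 h1
  -- per-solution facts
  have hIciT : Ici T₀ ⊆ Ioi T := fun x hx => lt_of_lt_of_le hT₀T hx
  have solfacts : ∀ φ : ℝ → Fin n → ℝ, IsLinSol n T Rt φ →
      (∀ m : ℕ, ∀ s ∈ Ioi T, ∀ t ∈ Ioi T, s ≤ t → (t - s) * (2 * Ca) ≤ m →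
        euclNorm (φ t) ≤ 2 ^ m * euclNorm (φ s)) ∧
      (∀ s t : ℝ, T₀ ≤ s → s ≤ t → euclNorm (φ t) ≤ 8 * euclNorm (φ s)) ∧
      (∃ φinf : Fin n → ℝ, Tendsto φ atTop (𝓝 φinf)) := by
    intro φ hφ
    obtain ⟨hφcont, hφeq⟩ := hφ
    set ψ := fun t => (EuclideanSpace.equiv (Fin n) ℝ).symm (φ t) with hψdef
    have hψcont : ContinuousOn ψ (Ioi T) :=
      (EuclideanSpace.equiv (Fin n) ℝ).symm.continuous.comp_continuousOn hφcont
    have heN : ∀ t, euclNorm (φ t) = ‖ψ t‖ := fun t => euclNorm_eq (φ t)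
    have hψcoord : ∀ i, ContinuousOn (fun t => ψ t i) (Ioi T) := fun i =>
      (PiLp.proj (𝕜 := ℝ) 2 (fun _ : Fin n => ℝ) i).continuous.comp_continuousOn hψcont
    have hMloc : ∀ u v : ℝ, T < u → u ≤ v → ∃ M : ℝ, 0 ≤ M ∧ ∀ τ ∈ Icc u v, ‖ψ τ‖ ≤ M := by
      intro u v hu huv
      obtain ⟨M, hM⟩ := (isCompact_Icc (a := u) (b := v)).exists_bound_of_continuousOn
        (hψcont.mono (fun x hx => lt_of_lt_of_le hu hx.1))
      exact ⟨max M 0, le_max_right _ _, fun τ hτ => (hM τ hτ).trans (le_max_left _ _)⟩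
    have hAψm : ∀ u v : ℝ, T < u → u ≤ v →
        AEStronglyMeasurable (fun τ => Aop τ (ψ τ)) (volume.restrict (Ι u v)) := by
      intro u v hu huv
      have hsub : Ι u v ⊆ Ioi T := by
        rw [uIoc_of_le huv]
        exact fun x hx => lt_trans hu hx.1
      apply aesm_euclid
      intro i
      have h1 : (fun τ => (Aop τ (ψ τ)) i) = fun τ => ∑ j, Rt τ i j * ψ τ j := rfl
      rw [h1]
      apply Finset.aemeasurable_fun_sum
      intro j _
      exact ((hRt_meas i j).aemeasurable.restrict).mul
        (((hψcoord j).mono hsub).aemeasurable measurableSet_uIoc)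
    have hψInt : ∀ u v : ℝ, T < u → u ≤ v →
        IntervalIntegrable (fun τ => Aop τ (ψ τ)) volume u v := by
      intro u v hu huv
      obtain ⟨M, hM0, hM⟩ := hMloc u v hu huv
      refine intInt_of_bound (hAψm u v hu huv) (Cf := Ca * M) ?_
      intro τ hτ
      rw [uIoc_of_le huv] at hτ
      have hτ' : τ ∈ Icc u v := ⟨le_of_lt hτ.1, hτ.2⟩
      have hτT : T < τ := lt_of_lt_of_le hu hτ'.1
      calc ‖Aop τ (ψ τ)‖ ≤ ‖Aop τ‖ * ‖ψ τ‖ := ContinuousLinearMap.le_opNorm _ _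
        _ ≤ Ca * M := mul_le_mul (hAnorm τ hτT) (hM τ hτ') (norm_nonneg _) hCa
    have hEq : ∀ s ∈ Ioi T, ∀ t ∈ Ioi T, s ≤ t →
        ψ t = ψ s - ∫ τ in s..t, Aop τ (ψ τ) := by
      intro s hs t ht hst
      have h0 := hφeq s hs t ht
      obtain ⟨M, hM0, hM⟩ := hMloc s t hs hst
      have hsub : Ι s t ⊆ Ioi T := by
        rw [uIoc_of_le hst]
        exact fun x hx => lt_trans hs hx.1
      have hIntPi : IntervalIntegrable (fun τ => (Rt τ).mulVec (φ τ)) volume s t := by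
        rw [intervalIntegrable_iff]
        refine Integrable.mono' (g := fun _ => (n:ℝ) * (C * M))
          (integrableOn_const measure_Ioc_lt_top.ne) ?_ ?_
        · apply aesm_pi
          intro i
          have h1 : (fun τ => (Rt τ).mulVec (φ τ) i) = fun τ => ∑ j, Rt τ i j * ψ τ j := rfl
          rw [h1]
          apply Finset.aemeasurable_fun_sum
          intro j _
          exact ((hRt_meas i j).aemeasurable.restrict).mul
            (((hψcoord j).mono hsub).aemeasurable measurableSet_uIoc)
        · filter_upwards [ae_restrict_mem measurableSet_uIoc] with τ hτ
          have hτT : τ ∈ Ioi T := hsub hτ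
          rw [uIoc_of_le hst] at hτ
          have hτ' : τ ∈ Icc s t := ⟨le_of_lt hτ.1, hτ.2⟩
          rw [pi_norm_le_iff_of_nonneg (by positivity)]
          intro i
          have h2 : (Rt τ).mulVec (φ τ) i = ∑ j, Rt τ i j * ψ τ j := rfl
          rw [h2, Real.norm_eq_abs]
          calc |∑ j, Rt τ i j * ψ τ j| ≤ ∑ j, |Rt τ i j * ψ τ j| :=
                Finset.abs_sum_le_sum_abs _ _
            _ ≤ ∑ _j : Fin n, C * M := by
                apply Finset.sum_le_sum
                intro j _
                rw [abs_mul]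
                exact mul_le_mul (hC τ hτT i j)
                  ((abs_apply_le_norm (ψ τ) j).trans (hM τ hτ')) (abs_nonneg _) hC0
            _ = (n:ℝ) * (C * M) := by simp [Finset.sum_const, Finset.card_univ]
      have h1 : ψ t = ψ s - ((EuclideanSpace.equiv (Fin n) ℝ).symm :
          (Fin n → ℝ) →L[ℝ] EuclideanSpace ℝ (Fin n))
          (∫ τ in s..t, (Rt τ).mulVec (φ τ)) := by
        simp only [hψdef]
        rw [h0]
        rfl
      rw [h1]
      congr 1
      rw [← ContinuousLinearMap.intervalIntegral_comp_comm _ hIntPi]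
      rfl
    have hineqCa : ∀ s ∈ Ioi T, ∀ t ∈ Ioi T, s ≤ t →
        ‖ψ t‖ ≤ ‖ψ s‖ + ∫ τ in s..t, Ca * ‖ψ τ‖ := by
      intro s hs t ht hst
      have h0 := hEq s hs t ht hst
      have h1 : ‖ψ t‖ ≤ ‖ψ s‖ + ‖∫ τ in s..t, Aop τ (ψ τ)‖ := by
        rw [h0]; exact norm_sub_le _ _
      refine h1.trans (add_le_add_right ?_ _)
      calc ‖∫ τ in s..t, Aop τ (ψ τ)‖ ≤ ∫ τ in s..t, ‖Aop τ (ψ τ)‖ :=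
            intervalIntegral.norm_integral_le_integral_norm hst
        _ ≤ ∫ τ in s..t, Ca * ‖ψ τ‖ := by
            apply intervalIntegral.integral_mono_on hst (hψInt s t hs hst).norm
            · apply ContinuousOn.intervalIntegrable
              apply continuousOn_const.mul
              apply continuous_norm.comp_continuousOn
              apply hψcont.mono
              rw [uIcc_of_le hst]
              exact fun x hx => lt_of_lt_of_le hs hx.1
            · intro x hx
              have hxT : T < x := lt_of_lt_of_le hs hx.1
              calc ‖Aop x (ψ x)‖ ≤ ‖Aop x‖ * ‖ψ x‖ := ContinuousLinearMap.le_opNorm _ _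
                _ ≤ Ca * ‖ψ x‖ :=
                  mul_le_mul_of_nonneg_right (hAnorm x hxT) (norm_nonneg _)
    have hiter := iter_bound hCa hψcont hineqCa
    refine ⟨?_, ?_⟩
    · intro m s hs t ht hst hm
      rw [heN, heN]
      exact hiter m s hs t ht hst hm
    -- integrability of σ ↦ A σ x for fixed x
    have hIxInt : ∀ u v : ℝ, T < u → u ≤ v → ∀ x : EuclideanSpace ℝ (Fin n),
        IntervalIntegrable (fun σ => Aop σ x) volume u v := by
      intro u v hu huv x
      refine intInt_of_bound (Cf := Ca * ‖x‖) ?_ ?_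
      · apply aesm_euclid
        intro i
        have h1 : (fun σ => (Aop σ x) i) = fun σ => ∑ j, Rt σ i j * x j := by
          funext σ; exact clm_apply_coord _ _ _
        rw [h1]
        apply Finset.aemeasurable_fun_sum
        intro j _
        exact ((hRt_meas i j).aemeasurable.restrict).mul aemeasurable_const
      · intro σ hσ
        rw [uIoc_of_le huv] at hσ
        have hσT : T < σ := lt_trans hu hσ.1
        calc ‖Aop σ x‖ ≤ ‖Aop σ‖ * ‖x‖ := ContinuousLinearMap.le_opNorm _ _
          _ ≤ Ca * ‖x‖ := mul_le_mul_of_nonneg_right (hAnorm σ hσT) (norm_nonneg _)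
    -- applied difference formula for B
    have hBapply : ∀ u v : ℝ, T < u → u ≤ v → ∀ x : EuclideanSpace ℝ (Fin n),
        (Bop u - Bop v) x = ∫ σ in u..v, Aop σ x := by
      intro u v hu huv x
      have hvT : T < v := lt_of_lt_of_le hu huv
      have hIx := hIxInt u v hu huv x
      have hext : ∀ y z : EuclideanSpace ℝ (Fin n), (∀ i, y i = z i) → y = z :=
        fun y z h => PiLp.ext h
      apply hext
      intro i
      have hL := ContinuousLinearMap.intervalIntegral_comp_comm
        (PiLp.proj (𝕜 := ℝ) 2 (fun _ : Fin n => ℝ) i) hIx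
      have h1 : ((Bop u - Bop v) x) i = ∑ j, (S u i j - S v i j) * x j := by
        rw [ContinuousLinearMap.sub_apply]
        have h2 : (Bop u x) i = ∑ j, S u i j * x j := clm_apply_coord _ _ _
        have h3 : (Bop v x) i = ∑ j, S v i j * x j := clm_apply_coord _ _ _
        have h5 : ((Bop u x - Bop v x : EuclideanSpace ℝ (Fin n))) i
            = (Bop u x) i - (Bop v x) i := rfl
        rw [h5, h2, h3, ← Finset.sum_sub_distrib]
        exact Finset.sum_congr rfl (fun j _ => (sub_mul _ _ _).symm)
      calc ((Bop u - Bop v) x) i = ∑ j, (S u i j - S v i j) * x j := h1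
        _ = ∫ σ in u..v, (Aop σ x) i := by
            have h6 : (fun σ => (Aop σ x) i) = fun σ => ∑ j, Rt σ i j * x j := by
              funext σ; exact clm_apply_coord _ _ _
            rw [h6, intervalIntegral.integral_finset_sum
              (fun j _ => (hentInt i j u hu v hvT).mul_const (x j))]
            refine Finset.sum_congr rfl (fun j _ => ?_)
            rw [intervalIntegral.integral_mul_const, hSdiff u hu v hvT i j]
        _ = (∫ σ in u..v, Aop σ x) i := hL
    -- the substituted function ξ
    set ξ := fun t => Wop t (ψ t) with hξdef
    have hξcont : ContinuousOn ξ (Ici T₀) := hWcont.clm_apply (hψcont.mono hIciT)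
    have hψof : ∀ t, T₀ ≤ t → ψ t = ξ t + Bop t (ξ t) := by
      intro t ht
      have h := hmulW t ht
      have h1 : ψ t = ((1 + Bop t) * Wop t) (ψ t) := by
        rw [h, ContinuousLinearMap.one_apply]
      calc ψ t = ((1 + Bop t) * Wop t) (ψ t) := h1
        _ = (1 + Bop t) (ξ t) := by rw [ContinuousLinearMap.mul_apply]
        _ = ξ t + Bop t (ξ t) := by
            rw [ContinuousLinearMap.add_apply, ContinuousLinearMap.one_apply]
    have hξle : ∀ t, T₀ ≤ t → ‖ξ t‖ ≤ 2 * ‖ψ t‖ := by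
      intro t ht
      calc ‖ξ t‖ ≤ ‖Wop t‖ * ‖ψ t‖ := ContinuousLinearMap.le_opNorm _ _
        _ ≤ 2 * ‖ψ t‖ := mul_le_mul_of_nonneg_right (hWnorm t ht) (norm_nonneg _)
    have hψle : ∀ t, T₀ ≤ t → ‖ψ t‖ ≤ 2 * ‖ξ t‖ := by
      intro t ht
      rw [hψof t ht]
      calc ‖ξ t + Bop t (ξ t)‖ ≤ ‖ξ t‖ + ‖Bop t (ξ t)‖ := norm_add_le _ _
        _ ≤ ‖ξ t‖ + ‖Bop t‖ * ‖ξ t‖ :=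
            add_le_add_right (ContinuousLinearMap.le_opNorm _ _) _
        _ ≤ 2 * ‖ξ t‖ := by nlinarith [hBhalf t ht, norm_nonneg (ξ t)]
    -- increment identity for ξ
    have hInc : ∀ u v : ℝ, T₀ ≤ u → u ≤ v →
        ξ v - ξ u = - Wop v (∫ σ in u..v, (Aop σ (ψ σ) - Aop σ (ξ u))) := by
      intro u v hu huv
      have hvT₀ : T₀ ≤ v := hu.trans huv
      have huT : T < u := lt_of_lt_of_le hT₀T hu
      have hvT : T < v := lt_of_lt_of_le hT₀T hvT₀
      have hResolv : Wop v - Wop u = Wop v * (Bop u - Bop v) * Wop u := by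
        have h1 : Wop v * (Bop u - Bop v) * Wop u
            = Wop v * ((1 + Bop u) * Wop u) - (Wop v * (1 + Bop v)) * Wop u := by
          simp only [mul_sub, sub_mul, mul_add, add_mul, one_mul, mul_one, mul_assoc]
          abel
        rw [h1, hmulW u hu, hWmul v hvT₀, mul_one, one_mul]
      have hstep : ξ v - ξ u
          = Wop v ((ψ v - ψ u) + (Bop u - Bop v) (ξ u)) := by
        have e1 : ξ v - ξ u = Wop v (ψ v - ψ u) + (Wop v - Wop u) (ψ u) := by
          rw [map_sub, ContinuousLinearMap.sub_apply]
          simp only [hξdef]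
          abel
        have e2 : (Wop v * (Bop u - Bop v) * Wop u) (ψ u)
            = Wop v ((Bop u - Bop v) (Wop u (ψ u))) := rfl
        rw [e1, hResolv, e2, map_add]
      rw [hstep, hBapply u v huT huv (ξ u), hEq u huT v hvT huv,
        intervalIntegral.integral_sub (hψInt u v huT huv) (hIxInt u v huT huv (ξ u)),
        ← map_neg]
      congr 1
      abel
    have hPmul : ∀ σ : ℝ, Matrix.toEuclideanCLM (𝕜 := ℝ) (Rt σ * S σ) = Aop σ * Bop σ := by
      intro σ; simp only [hAdef, hBdef]; exact map_mul _ _ _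
    have hqII : ∀ u v : ℝ, T' < u → u ≤ v → IntervalIntegrable q volume u v := by
      intro u v hu huv
      rw [intervalIntegrable_iff]
      exact hqInt.mono_set (by rw [uIoc_of_le huv]; exact fun x hx => lt_trans hu hx.1)
    have hqξII : ∀ u v : ℝ, T₀ ≤ u → u ≤ v →
        IntervalIntegrable (fun τ => q τ * ‖ξ τ‖) volume u v := by
      intro u v hu huv
      refine (hqII u v (lt_of_lt_of_le hT₀T' hu) huv).mul_continuousOn ?_
      rw [uIcc_of_le huv]
      exact continuous_norm.comp_continuousOn (hξcont.mono (fun x hx => hu.trans hx.1))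
    have hkey : ∀ s t : ℝ, T₀ ≤ s → s ≤ t →
        ‖ξ t - ξ s‖ ≤ 2 * ∫ τ in s..t, q τ * ‖ξ τ‖ := by
      intro s t hs hst
      have hsT : T < s := lt_of_lt_of_le hT₀T hs
      obtain ⟨Mψ, hMψ0, hMψ⟩ := hMloc s t hsT hst
      have hmemT₀ : ∀ τ, τ ∈ Icc s t → T₀ ≤ τ := fun τ hτ => hs.trans hτ.1
      have hmemT : ∀ τ, τ ∈ Icc s t → T < τ := fun τ hτ => lt_of_lt_of_le hT₀T (hmemT₀ τ hτ)
      have hMξ : ∀ τ ∈ Icc s t, ‖ξ τ‖ ≤ 2 * Mψ := fun τ hτ =>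
        (hξle τ (hmemT₀ τ hτ)).trans (by nlinarith [hMψ τ hτ])
      have hψlip : ∀ u v : ℝ, s ≤ u → u ≤ v → v ≤ t → ‖ψ v - ψ u‖ ≤ Ca * Mψ * (v - u) := by
        intro u v hu huv hvt
        have huT : T < u := hmemT u ⟨hu, huv.trans hvt⟩
        have hvT : T < v := hmemT v ⟨hu.trans huv, hvt⟩
        rw [hEq u huT v hvT huv, sub_sub_cancel_left, norm_neg]
        have hb := intervalIntegral.norm_integral_le_of_norm_le_const (C := Ca * Mψ)
          (f := fun τ => Aop τ (ψ τ)) (a := u) (b := v) (fun σ hσ => by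
            rw [uIoc_of_le huv] at hσ
            have hσIcc : σ ∈ Icc s t := ⟨hu.trans hσ.1.le, hσ.2.trans hvt⟩
            calc ‖Aop σ (ψ σ)‖ ≤ ‖Aop σ‖ * ‖ψ σ‖ := ContinuousLinearMap.le_opNorm _ _
              _ ≤ Ca * Mψ := mul_le_mul (hAnorm σ (hmemT σ hσIcc)) (hMψ σ hσIcc)
                  (norm_nonneg _) hCa)
        calc ‖∫ τ in u..v, Aop τ (ψ τ)‖ ≤ Ca * Mψ * |v - u| := hb
          _ = Ca * Mψ * (v - u) := by rw [abs_of_nonneg (by linarith)]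
      have hξlip : ∀ u v : ℝ, s ≤ u → u ≤ v → v ≤ t →
          ‖ξ v - ξ u‖ ≤ 6 * Ca * Mψ * (v - u) := by
        intro u v hu huv hvt
        have huT₀ : T₀ ≤ u := hs.trans hu
        have huT : T < u := lt_of_lt_of_le hT₀T huT₀
        have hξub : ‖ξ u‖ ≤ 2 * Mψ := hMξ u ⟨hu, huv.trans hvt⟩
        rw [hInc u v huT₀ huv, norm_neg]
        have hW2 : ‖Wop v (∫ σ in u..v, (Aop σ (ψ σ) - Aop σ (ξ u)))‖
            ≤ 2 * ‖∫ σ in u..v, (Aop σ (ψ σ) - Aop σ (ξ u))‖ :=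
          (ContinuousLinearMap.le_opNorm _ _).trans
            (mul_le_mul_of_nonneg_right (hWnorm v (huT₀.trans huv)) (norm_nonneg _))
        refine hW2.trans ?_
        have hb := intervalIntegral.norm_integral_le_of_norm_le_const (C := 3 * Ca * Mψ)
          (f := fun σ => Aop σ (ψ σ) - Aop σ (ξ u)) (a := u) (b := v) (fun σ hσ => by
            rw [uIoc_of_le huv] at hσ
            have hσIcc : σ ∈ Icc s t := ⟨hu.trans hσ.1.le, hσ.2.trans hvt⟩
            have b1 : ‖Aop σ (ψ σ)‖ ≤ Ca * Mψ :=
              (ContinuousLinearMap.le_opNorm _ _).trans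
                (mul_le_mul (hAnorm σ (hmemT σ hσIcc)) (hMψ σ hσIcc) (norm_nonneg _) hCa)
            have b2 : ‖Aop σ (ξ u)‖ ≤ Ca * (2 * Mψ) :=
              (ContinuousLinearMap.le_opNorm _ _).trans
                (mul_le_mul (hAnorm σ (hmemT σ hσIcc)) hξub (norm_nonneg _) hCa)
            calc ‖Aop σ (ψ σ) - Aop σ (ξ u)‖ ≤ ‖Aop σ (ψ σ)‖ + ‖Aop σ (ξ u)‖ :=
                  norm_sub_le _ _
              _ ≤ 3 * Ca * Mψ := by linarith)
        calc 2 * ‖∫ σ in u..v, (Aop σ (ψ σ) - Aop σ (ξ u))‖ ≤ 2 * (3 * Ca * Mψ * |v - u|) :=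
              by linarith
          _ = 6 * Ca * Mψ * (v - u) := by rw [abs_of_nonneg (by linarith)]; ring
      have hpiece : ∀ Δ : ℝ, 0 ≤ Δ → ∀ u v : ℝ, s ≤ u → u ≤ v → v ≤ t → v - u ≤ Δ →
          ‖ξ v - ξ u‖ ≤ 2 * (∫ τ in u..v, q τ * ‖ξ τ‖) + 12 * Ca^2 * Mψ * Δ * (v - u) := by
        intro Δ hΔ u v hu huv hvt hvuΔ
        have huIcc : u ∈ Icc s t := ⟨hu, huv.trans hvt⟩
        have huT₀ : T₀ ≤ u := hs.trans hu
        have huT : T < u := lt_of_lt_of_le hT₀T huT₀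
        have hvT : T < v := lt_of_lt_of_le huT huv
        have hξub : ‖ξ u‖ ≤ 2 * Mψ := hMξ u huIcc
        have hsubIcc : Ι u v ⊆ Icc s t := by
          rw [uIoc_of_le huv]; exact fun x hx => ⟨hu.trans hx.1.le, hx.2.trans hvt⟩
        have hsubIoi : Ι u v ⊆ Ioi T := fun x hx => hmemT x (hsubIcc hx)
        set F1 := fun σ => (Matrix.toEuclideanCLM (𝕜 := ℝ) (Rt σ * S σ)) (ξ σ) with hF1
        set F2 := fun σ => Aop σ (ψ σ - ψ u) with hF2
        set F3 := fun σ => Aop σ ((Bop u - Bop σ) (ξ u)) with hF3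
        set F4 := fun σ => Aop σ (Bop σ (ξ u - ξ σ)) with hF4
        have hdecomp : ∀ σ : ℝ, T₀ ≤ σ → Aop σ (ψ σ) - Aop σ (ξ u)
            = F1 σ + F2 σ + F3 σ + F4 σ := by
          intro σ hσ
          have hBu : Bop u (ξ u) = ψ u - ξ u := by
            rw [hψof u huT₀]; abel
          have hmul : F1 σ = Aop σ (Bop σ (ξ σ)) := by
            simp only [hF1]
            rw [hPmul σ, ContinuousLinearMap.mul_apply]
          calc Aop σ (ψ σ) - Aop σ (ξ u)
              = Aop σ (Bop σ (ξ σ)) + (Aop σ (ψ σ) - Aop σ (ψ u))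
                + (Aop σ (Bop u (ξ u)) - Aop σ (Bop σ (ξ u)))
                + (Aop σ (Bop σ (ξ u)) - Aop σ (Bop σ (ξ σ))) := by
                rw [hBu]
                simp only [map_sub]
                abel
            _ = F1 σ + F2 σ + F3 σ + F4 σ := by
                rw [hmul]
                simp only [hF2, hF3, hF4, ContinuousLinearMap.sub_apply, map_sub]
        have hI1 : IntervalIntegrable F1 volume u v := by
          rw [intervalIntegrable_iff]
          refine Integrable.mono' (g := fun σ => q σ * (2 * Mψ))
            ((hqInt.mono_set (fun x hx =>
              lt_of_lt_of_le hT₀T' (hmemT₀ x (hsubIcc hx)))).mul_const _) ?_ ?_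
          · apply aesm_euclid
            intro i
            have h1 : (fun σ => (F1 σ) i)
                = fun σ => ∑ j, (∑ k, Rt σ i k * S σ k j) * (ξ σ) j := by
              funext σ
              simp only [hF1]
              rw [clm_apply_coord]
              simp only [Matrix.mul_apply]
            rw [h1]
            apply Finset.aemeasurable_fun_sum; intro j _
            apply AEMeasurable.mul
            · apply Finset.aemeasurable_fun_sum; intro k _
              exact ((hRt_meas i k).aemeasurable.restrict).mul
                (((hScont k j).mono hsubIoi).aemeasurable measurableSet_uIoc)
            · have hcont : ContinuousOn (fun σ => (ξ σ) j) (Ici T₀) :=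
                (PiLp.proj (𝕜 := ℝ) 2 (fun _ : Fin n => ℝ) j).continuous.comp_continuousOn
                  hξcont
              exact ((hcont.mono (fun x hx => hmemT₀ x (hsubIcc hx))).aemeasurable
                measurableSet_uIoc)
          · filter_upwards [ae_restrict_mem measurableSet_uIoc] with σ hσ
            have hσIcc := hsubIcc hσ
            calc ‖F1 σ‖ ≤ ‖Matrix.toEuclideanCLM (𝕜 := ℝ) (Rt σ * S σ)‖ * ‖ξ σ‖ :=
                  ContinuousLinearMap.le_opNorm _ _
              _ ≤ q σ * (2 * Mψ) := by
                  rw [hPmul σ, ← hq_eq σ]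
                  exact mul_le_mul_of_nonneg_left (hMξ σ hσIcc) (hq0 σ)
        have hI2 : IntervalIntegrable F2 volume u v := by
          have h1 : F2 = fun σ => Aop σ (ψ σ) - Aop σ (ψ u) := by
            funext σ; simp only [hF2, map_sub]
          rw [h1]
          exact (hψInt u v huT huv).sub (hIxInt u v huT huv (ψ u))
        have hI3 : IntervalIntegrable F3 volume u v := by
          refine intInt_of_bound (Cf := Ca * (Ca * Δ * (2 * Mψ))) ?_ ?_
          · apply aesm_euclid
            intro i
            have h1 : (fun σ => (F3 σ) i)
                = fun σ => ∑ j, Rt σ i j * (((Bop u - Bop σ) (ξ u)) j) := by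
              funext σ; simp only [hF3]; exact clm_apply_coord _ _ _
            rw [h1]
            apply Finset.aemeasurable_fun_sum; intro j _
            apply ((hRt_meas i j).aemeasurable.restrict).mul
            have h2 : (fun σ => (((Bop u - Bop σ) (ξ u)) j))
                = fun σ => (∑ k, S u j k * (ξ u) k) - ∑ k, S σ j k * (ξ u) k := by
              funext σ
              rw [ContinuousLinearMap.sub_apply]
              have e1 : (Bop u (ξ u)) j = ∑ k, S u j k * (ξ u) k := clm_apply_coord _ _ _
              have e2 : (Bop σ (ξ u)) j = ∑ k, S σ j k * (ξ u) k := clm_apply_coord _ _ _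
              rw [← e1, ← e2]; rfl
            rw [h2]
            apply AEMeasurable.sub aemeasurable_const
            apply Finset.aemeasurable_fun_sum; intro k _
            exact (((hScont j k).mono hsubIoi).aemeasurable measurableSet_uIoc).mul
              aemeasurable_const
          · intro σ hσ
            have hσIcc := hsubIcc hσ
            have hσT : T < σ := hmemT σ hσIcc
            rw [uIoc_of_le huv] at hσ
            have hBd : ‖(Bop u - Bop σ) (ξ u)‖ ≤ Ca * Δ * (2 * Mψ) := by
              calc ‖(Bop u - Bop σ) (ξ u)‖ ≤ ‖Bop u - Bop σ‖ * ‖ξ u‖ :=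
                    ContinuousLinearMap.le_opNorm _ _
                _ ≤ (Ca * Δ) * (2 * Mψ) := by
                    apply mul_le_mul _ hξub (norm_nonneg _) (by positivity)
                    refine (hBlip u huT σ hσT hσ.1.le).trans ?_
                    have : σ - u ≤ Δ := by linarith [hσ.2]
                    nlinarith
                _ = Ca * Δ * (2 * Mψ) := by ring
            calc ‖F3 σ‖ ≤ ‖Aop σ‖ * ‖(Bop u - Bop σ) (ξ u)‖ :=
                  ContinuousLinearMap.le_opNorm _ _
              _ ≤ Ca * (Ca * Δ * (2 * Mψ)) :=
                  mul_le_mul (hAnorm σ hσT) hBd (norm_nonneg _) hCa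
        have hI4 : IntervalIntegrable F4 volume u v := by
          refine intInt_of_bound (Cf := Ca * ((1/2) * (6 * Ca * Mψ * Δ))) ?_ ?_
          · apply aesm_euclid
            intro i
            have h1 : (fun σ => (F4 σ) i)
                = fun σ => ∑ j, Rt σ i j * ((Bop σ (ξ u - ξ σ)) j) := by
              funext σ; simp only [hF4]; exact clm_apply_coord _ _ _
            rw [h1]
            apply Finset.aemeasurable_fun_sum; intro j _
            apply ((hRt_meas i j).aemeasurable.restrict).mul
            have h2 : (fun σ => ((Bop σ (ξ u - ξ σ)) j))
                = fun σ => ∑ k, S σ j k * ((ξ u) k - (ξ σ) k) := by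
              funext σ; exact clm_apply_coord _ _ _
            rw [h2]
            apply Finset.aemeasurable_fun_sum; intro k _
            apply (((hScont j k).mono hsubIoi).aemeasurable measurableSet_uIoc).mul
            apply AEMeasurable.sub aemeasurable_const
            have hcont : ContinuousOn (fun σ => (ξ σ) k) (Ici T₀) :=
              (PiLp.proj (𝕜 := ℝ) 2 (fun _ : Fin n => ℝ) k).continuous.comp_continuousOn hξcont
            exact ((hcont.mono (fun x hx => hmemT₀ x (hsubIcc hx))).aemeasurable
              measurableSet_uIoc)
          · intro σ hσ
            have hσIcc := hsubIcc hσ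
            have hσT : T < σ := hmemT σ hσIcc
            have hσT₀ : T₀ ≤ σ := hmemT₀ σ hσIcc
            rw [uIoc_of_le huv] at hσ
            have hd : ‖ξ u - ξ σ‖ ≤ 6 * Ca * Mψ * Δ := by
              rw [norm_sub_rev]
              refine (hξlip u σ hu hσ.1.le hσIcc.2).trans ?_
              have h9 : σ - u ≤ Δ := by linarith [hσ.2]
              exact mul_le_mul_of_nonneg_left h9 (by positivity)
            have hBd : ‖Bop σ (ξ u - ξ σ)‖ ≤ (1/2) * (6 * Ca * Mψ * Δ) := by
              calc ‖Bop σ (ξ u - ξ σ)‖ ≤ ‖Bop σ‖ * ‖ξ u - ξ σ‖ :=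
                    ContinuousLinearMap.le_opNorm _ _
                _ ≤ (1/2) * (6 * Ca * Mψ * Δ) :=
                    mul_le_mul (hBhalf σ hσT₀) hd (norm_nonneg _) (by norm_num)
            calc ‖F4 σ‖ ≤ ‖Aop σ‖ * ‖Bop σ (ξ u - ξ σ)‖ :=
                  ContinuousLinearMap.le_opNorm _ _
              _ ≤ Ca * ((1/2) * (6 * Ca * Mψ * Δ)) :=
                  mul_le_mul (hAnorm σ hσT) hBd (norm_nonneg _) hCa
        have hsum : (∫ σ in u..v, (Aop σ (ψ σ) - Aop σ (ξ u)))
            = (∫ σ in u..v, F1 σ) + (∫ σ in u..v, F2 σ) + (∫ σ in u..v, F3 σ)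
              + (∫ σ in u..v, F4 σ) := by
          have hcongr : (∫ σ in u..v, (Aop σ (ψ σ) - Aop σ (ξ u)))
              = ∫ σ in u..v, (F1 σ + F2 σ + F3 σ + F4 σ) := by
            apply intervalIntegral.integral_congr
            intro σ hσ
            rw [uIcc_of_le huv] at hσ
            exact hdecomp σ (huT₀.trans hσ.1)
          rw [hcongr, intervalIntegral.integral_add ((hI1.add hI2).add hI3) hI4,
            intervalIntegral.integral_add (hI1.add hI2) hI3,
            intervalIntegral.integral_add hI1 hI2]
        have e1 : ‖∫ σ in u..v, F1 σ‖ ≤ ∫ τ in u..v, q τ * ‖ξ τ‖ := by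
          refine (intervalIntegral.norm_integral_le_integral_norm huv).trans ?_
          apply intervalIntegral.integral_mono_on huv hI1.norm (hqξII u v huT₀ huv)
          intro σ hσ
          calc ‖F1 σ‖ ≤ ‖Matrix.toEuclideanCLM (𝕜 := ℝ) (Rt σ * S σ)‖ * ‖ξ σ‖ :=
                ContinuousLinearMap.le_opNorm _ _
            _ = q σ * ‖ξ σ‖ := by rw [hPmul σ, ← hq_eq σ]
        have e2 : ‖∫ σ in u..v, F2 σ‖ ≤ Ca * (Ca * Mψ * Δ) * (v - u) := by
          have hb := intervalIntegral.norm_integral_le_of_norm_le_const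
            (C := Ca * (Ca * Mψ * Δ)) (f := F2) (a := u) (b := v) (fun σ hσ => by
              have hσIcc := hsubIcc hσ
              rw [uIoc_of_le huv] at hσ
              have hlp : ‖ψ σ - ψ u‖ ≤ Ca * Mψ * Δ := by
                refine (hψlip u σ hu hσ.1.le hσIcc.2).trans ?_
                have h9 : σ - u ≤ Δ := by linarith [hσ.2]
                exact mul_le_mul_of_nonneg_left h9 (by positivity)
              calc ‖F2 σ‖ ≤ ‖Aop σ‖ * ‖ψ σ - ψ u‖ := ContinuousLinearMap.le_opNorm _ _
                _ ≤ Ca * (Ca * Mψ * Δ) :=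
                    mul_le_mul (hAnorm σ (hmemT σ hσIcc)) hlp (norm_nonneg _) hCa)
          calc ‖∫ σ in u..v, F2 σ‖ ≤ Ca * (Ca * Mψ * Δ) * |v - u| := hb
            _ = Ca * (Ca * Mψ * Δ) * (v - u) := by rw [abs_of_nonneg (by linarith)]
        have e3 : ‖∫ σ in u..v, F3 σ‖ ≤ Ca * (Ca * Δ * (2 * Mψ)) * (v - u) := by
          have hb := intervalIntegral.norm_integral_le_of_norm_le_const
            (C := Ca * (Ca * Δ * (2 * Mψ))) (f := F3) (a := u) (b := v) (fun σ hσ => by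
              have hσIcc := hsubIcc hσ
              have hσT : T < σ := hmemT σ hσIcc
              rw [uIoc_of_le huv] at hσ
              have hBd : ‖(Bop u - Bop σ) (ξ u)‖ ≤ Ca * Δ * (2 * Mψ) := by
                calc ‖(Bop u - Bop σ) (ξ u)‖ ≤ ‖Bop u - Bop σ‖ * ‖ξ u‖ :=
                      ContinuousLinearMap.le_opNorm _ _
                  _ ≤ (Ca * Δ) * (2 * Mψ) := by
                      apply mul_le_mul _ hξub (norm_nonneg _) (by positivity)
                      refine (hBlip u huT σ hσT hσ.1.le).trans ?_
                      have : σ - u ≤ Δ := by linarith [hσ.2]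
                      nlinarith
                  _ = Ca * Δ * (2 * Mψ) := by ring
              calc ‖F3 σ‖ ≤ ‖Aop σ‖ * ‖(Bop u - Bop σ) (ξ u)‖ :=
                    ContinuousLinearMap.le_opNorm _ _
                _ ≤ Ca * (Ca * Δ * (2 * Mψ)) :=
                    mul_le_mul (hAnorm σ hσT) hBd (norm_nonneg _) hCa)
          calc ‖∫ σ in u..v, F3 σ‖ ≤ Ca * (Ca * Δ * (2 * Mψ)) * |v - u| := hb
            _ = Ca * (Ca * Δ * (2 * Mψ)) * (v - u) := by rw [abs_of_nonneg (by linarith)]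
        have e4 : ‖∫ σ in u..v, F4 σ‖ ≤ Ca * ((1/2) * (6 * Ca * Mψ * Δ)) * (v - u) := by
          have hb := intervalIntegral.norm_integral_le_of_norm_le_const
            (C := Ca * ((1/2) * (6 * Ca * Mψ * Δ))) (f := F4) (a := u) (b := v) (fun σ hσ => by
              have hσIcc := hsubIcc hσ
              have hσT : T < σ := hmemT σ hσIcc
              have hσT₀ : T₀ ≤ σ := hmemT₀ σ hσIcc
              rw [uIoc_of_le huv] at hσ
              have hd : ‖ξ u - ξ σ‖ ≤ 6 * Ca * Mψ * Δ := by
                rw [norm_sub_rev]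
                refine (hξlip u σ hu hσ.1.le hσIcc.2).trans ?_
                have h9 : σ - u ≤ Δ := by linarith [hσ.2]
                exact mul_le_mul_of_nonneg_left h9 (by positivity)
              have hBd : ‖Bop σ (ξ u - ξ σ)‖ ≤ (1/2) * (6 * Ca * Mψ * Δ) := by
                calc ‖Bop σ (ξ u - ξ σ)‖ ≤ ‖Bop σ‖ * ‖ξ u - ξ σ‖ :=
                      ContinuousLinearMap.le_opNorm _ _
                  _ ≤ (1/2) * (6 * Ca * Mψ * Δ) :=
                      mul_le_mul (hBhalf σ hσT₀) hd (norm_nonneg _) (by norm_num)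
              calc ‖F4 σ‖ ≤ ‖Aop σ‖ * ‖Bop σ (ξ u - ξ σ)‖ :=
                    ContinuousLinearMap.le_opNorm _ _
                _ ≤ Ca * ((1/2) * (6 * Ca * Mψ * Δ)) :=
                    mul_le_mul (hAnorm σ hσT) hBd (norm_nonneg _) hCa)
          calc ‖∫ σ in u..v, F4 σ‖ ≤ Ca * ((1/2) * (6 * Ca * Mψ * Δ)) * |v - u| := hb
            _ = Ca * ((1/2) * (6 * Ca * Mψ * Δ)) * (v - u) := by
                rw [abs_of_nonneg (by linarith)]
        rw [hInc u v huT₀ huv, norm_neg]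
        have hW2 : ‖Wop v (∫ σ in u..v, (Aop σ (ψ σ) - Aop σ (ξ u)))‖
            ≤ 2 * ‖∫ σ in u..v, (Aop σ (ψ σ) - Aop σ (ξ u))‖ :=
          (ContinuousLinearMap.le_opNorm _ _).trans
            (mul_le_mul_of_nonneg_right (hWnorm v (huT₀.trans huv)) (norm_nonneg _))
        refine hW2.trans ?_
        have n1 := norm_add_le ((∫ σ in u..v, F1 σ) + (∫ σ in u..v, F2 σ)
          + (∫ σ in u..v, F3 σ)) (∫ σ in u..v, F4 σ)
        have n2 := norm_add_le ((∫ σ in u..v, F1 σ) + (∫ σ in u..v, F2 σ))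
          (∫ σ in u..v, F3 σ)
        have n3 := norm_add_le (∫ σ in u..v, F1 σ) (∫ σ in u..v, F2 σ)
        rw [hsum]
        have hff : Ca * (Ca * Mψ * Δ) * (v - u) + Ca * (Ca * Δ * (2 * Mψ)) * (v - u)
            + Ca * ((1/2) * (6 * Ca * Mψ * Δ)) * (v - u) = 6 * Ca^2 * Mψ * Δ * (v - u) := by
          ring
        linarith
      -- telescoping
      refine le_of_forall_pos_le_add ?_
      intro ε hε
      obtain ⟨m, hm⟩ := exists_nat_gt (max 1 (12 * Ca^2 * Mψ * (t - s)^2 / ε))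
      have hm1 : (1:ℝ) < m := lt_of_le_of_lt (le_max_left _ _) hm
      have hm0 : 0 < m := by exact_mod_cast lt_trans zero_lt_one hm1
      have hm0' : (0:ℝ) < m := by exact_mod_cast hm0
      set Δ := (t - s)/m with hΔdef
      have hΔ0 : 0 ≤ Δ := div_nonneg (by linarith) (by positivity)
      set u : ℕ → ℝ := fun k => s + k * Δ with hudef
      have hu0 : u 0 = s := by simp [hudef]
      have hum : u m = t := by
        simp only [hudef, hΔdef]
        field_simp
        ring
      have hustep : ∀ k : ℕ, u (k+1) - u k = Δ := by
        intro k; simp only [hudef]; push_cast; ring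
      have humono : ∀ k, u k ≤ u (k+1) := fun k => by
        have := hustep k; linarith
      have hurange : ∀ k : ℕ, k ≤ m → s ≤ u k ∧ u k ≤ t := by
        intro k hk
        have hk' : (k:ℝ) ≤ m := by exact_mod_cast hk
        constructor
        · simp only [hudef]
          nlinarith [Nat.cast_nonneg (α := ℝ) k]
        · have h1 : u k = s + k * Δ := rfl
          have h2 : (m:ℝ) * Δ = t - s := by
            rw [hΔdef]; field_simp
          nlinarith [Nat.cast_nonneg (α := ℝ) k]
      have htele : ξ t - ξ s = ∑ k ∈ Finset.range m, (ξ (u (k+1)) - ξ (u k)) := by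
        rw [Finset.sum_range_sub (fun k => ξ (u k)), hu0, hum]
      have hterms : ∀ k ∈ Finset.range m, ‖ξ (u (k+1)) - ξ (u k)‖ ≤
          2 * (∫ τ in u k..u (k+1), q τ * ‖ξ τ‖) + 12 * Ca^2 * Mψ * Δ * Δ := by
        intro k hk
        have hk' := Finset.mem_range.1 hk
        have h1 := hurange k hk'.le
        have h2 := hurange (k+1) hk'
        have hp := hpiece Δ hΔ0 (u k) (u (k+1)) h1.1 (humono k) h2.2 (le_of_eq (hustep k))
        rw [hustep k] at hp
        exact hp
      calc ‖ξ t - ξ s‖ = ‖∑ k ∈ Finset.range m, (ξ (u (k+1)) - ξ (u k))‖ := by rw [htele]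
        _ ≤ ∑ k ∈ Finset.range m, ‖ξ (u (k+1)) - ξ (u k)‖ := norm_sum_le _ _
        _ ≤ ∑ k ∈ Finset.range m, (2 * (∫ τ in u k..u (k+1), q τ * ‖ξ τ‖)
              + 12 * Ca^2 * Mψ * Δ * Δ) := Finset.sum_le_sum hterms
        _ = 2 * (∫ τ in s..t, q τ * ‖ξ τ‖) + m * (12 * Ca^2 * Mψ * Δ * Δ) := by
            rw [Finset.sum_add_distrib, Finset.sum_const, Finset.card_range]
            congr 1
            · rw [← Finset.mul_sum]
              congr 1
              have hadj := intervalIntegral.sum_integral_adjacent_intervals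
                (f := fun τ => q τ * ‖ξ τ‖) (a := u) (n := m)
                (fun k hk => hqξII (u k) (u (k+1))
                  (hs.trans (hurange k hk.le).1) (humono k))
              rw [hadj, hu0, hum]
            · simp [nsmul_eq_mul]
        _ ≤ 2 * (∫ τ in s..t, q τ * ‖ξ τ‖) + ε := by
            have hcalc : (m:ℝ) * (12 * Ca^2 * Mψ * Δ * Δ)
                = 12 * Ca^2 * Mψ * (t - s)^2 / m := by
              rw [hΔdef]; field_simp
            rw [hcalc]
            have hK : 12 * Ca^2 * Mψ * (t - s)^2 / ε < m :=
              lt_of_le_of_lt (le_max_right _ _) hm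
            have h5 : 12 * Ca^2 * Mψ * (t - s)^2 < ε * m := by
              rw [div_lt_iff₀ hε] at hK
              linarith
            have h6 : 12 * Ca^2 * Mψ * (t - s)^2 / m ≤ ε := by
              rw [div_le_iff₀ hm0']
              linarith
            linarith
    have hstab : ∀ s t : ℝ, T₀ ≤ s → s ≤ t → ‖ξ t‖ ≤ 2 * ‖ξ s‖ := by
      intro s t hs hst
      have hIccT₀ : Icc s t ⊆ Ici T₀ := fun x hx => hs.trans hx.1
      refine bootstrap (g := fun τ => 2 * q τ) hst (hξcont.mono hIccT₀)
        ((hqII s t (lt_of_lt_of_le hT₀T' hs) hst).const_mul 2)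
        (fun τ _ => mul_nonneg (by norm_num) (hq0 τ)) ?_ ?_ t ⟨hst, le_rfl⟩
      · rw [intervalIntegral.integral_const_mul]
        have h1 : (∫ τ in s..t, q τ) ≤ ∫ τ in Ioi s, q τ := by
          rw [intervalIntegral.integral_of_le hst]
          apply setIntegral_mono_set
          · exact hqInt.mono_set (fun x hx => lt_trans (lt_of_lt_of_le hT₀T' hs) hx)
          · exact ae_of_all _ hq0
          · exact HasSubset.Subset.eventuallyLE Ioc_subset_Ioi_self
        have h2 := htail₀ s hs
        linarith
      · intro r hr
        have hk := hkey s r hs hr.1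
        have h3 : ‖ξ r‖ ≤ ‖ξ s‖ + ‖ξ r - ξ s‖ := by
          have h5 := norm_add_le (ξ s) (ξ r - ξ s)
          simpa using h5
        have h4 : (∫ τ in s..r, (2 * q τ) * ‖ξ τ‖) = 2 * ∫ τ in s..r, q τ * ‖ξ τ‖ := by
          rw [← intervalIntegral.integral_const_mul]
          congr 1; funext τ; ring
        rw [h4]
        linarith
    constructor
    · intro s t hs hst
      rw [heN, heN]
      have h1 := hψle t (hs.trans hst)
      have h2 := hstab s t hs hst
      have h3 := hξle s hs
      nlinarith [norm_nonneg (ξ t), norm_nonneg (ψ s)]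
    · set Mg := 2 * ‖ξ T₀‖ with hMgdef
      have hMg0 : 0 ≤ Mg := by positivity
      have hbddξ : ∀ t, T₀ ≤ t → ‖ξ t‖ ≤ Mg := fun t ht => hstab T₀ t le_rfl ht
      have hdist : ∀ s t : ℝ, T₀ ≤ s → s ≤ t →
          dist (ξ s) (ξ t) ≤ 2 * Mg * ∫ τ in Ioi s, q τ := by
        intro s t hs hst
        rw [dist_eq_norm, norm_sub_rev]
        refine (hkey s t hs hst).trans ?_
        have h1 : (∫ τ in s..t, q τ * ‖ξ τ‖) ≤ ∫ τ in s..t, q τ * Mg := by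
          apply intervalIntegral.integral_mono_on hst (hqξII s t hs hst)
            ((hqII s t (lt_of_lt_of_le hT₀T' hs) hst).mul_const _)
          intro x hx
          exact mul_le_mul_of_nonneg_left (hbddξ x (hs.trans hx.1)) (hq0 x)
        have h2 : (∫ τ in s..t, q τ * Mg) = (∫ τ in s..t, q τ) * Mg :=
          intervalIntegral.integral_mul_const _ _
        have h3 : (∫ τ in s..t, q τ) ≤ ∫ τ in Ioi s, q τ := by
          rw [intervalIntegral.integral_of_le hst]
          apply setIntegral_mono_set
          · exact hqInt.mono_set (fun x hx => lt_trans (lt_of_lt_of_le hT₀T' hs) hx)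
          · exact ae_of_all _ hq0
          · exact HasSubset.Subset.eventuallyLE Ioc_subset_Ioi_self
        have h4 : (∫ τ in s..t, q τ) * Mg ≤ (∫ τ in Ioi s, q τ) * Mg :=
          mul_le_mul_of_nonneg_right h3 hMg0
        calc 2 * ∫ τ in s..t, q τ * ‖ξ τ‖ ≤ 2 * ((∫ τ in Ioi s, q τ) * Mg) := by
              rw [h2] at h1; linarith
          _ = 2 * Mg * ∫ τ in Ioi s, q τ := by ring
      have hh0 : Tendsto (fun u' : ℝ => 2 * Mg * ∫ τ in Ioi u', q τ) atTop (𝓝 0) := by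
        have h5 := htail.const_mul (2 * Mg)
        simpa using h5
      obtain ⟨L, hL⟩ := tendsto_of_tail_control ξ _ T₀ hh0 hdist
      have hBξ0 : Tendsto (fun t => Bop t (ξ t)) atTop (𝓝 0) := by
        apply squeeze_zero_norm' (a := fun t => ‖Bop t‖ * Mg)
        · filter_upwards [eventually_ge_atTop T₀] with t ht
          exact (ContinuousLinearMap.le_opNorm _ _).trans
            (mul_le_mul_of_nonneg_left (hbddξ t ht) (norm_nonneg _))
        · have h6 := hBn.mul_const Mg
          rw [zero_mul] at h6
          exact h6
      have hψL : Tendsto ψ atTop (𝓝 L) := by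
        have h1 : Tendsto (fun t => ξ t + Bop t (ξ t)) atTop (𝓝 (L + 0)) := hL.add hBξ0
        rw [add_zero] at h1
        refine h1.congr' ?_
        filter_upwards [eventually_ge_atTop T₀] with t ht
        exact (hψof t ht).symm
      refine ⟨(EuclideanSpace.equiv (Fin n) ℝ) L, ?_⟩
      have h2 := ((EuclideanSpace.equiv (Fin n) ℝ).continuous.tendsto L).comp hψL
      refine h2.congr ?_
      intro t
      simp only [Function.comp_apply, hψdef]
      exact (EuclideanSpace.equiv (Fin n) ℝ).apply_symm_apply (φ t)
  constructor
  · intro ε hε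
    set N := Nat.ceil ((T₀ - T) * (2 * Ca)) with hN
    set κ := (8:ℝ) * 2^N with hκ
    have hκpos : 0 < κ := by positivity
    have h2N : (1:ℝ) ≤ 2^N := one_le_pow₀ one_le_two
    refine ⟨ε / κ, by positivity, ?_⟩
    intro φ hφ t₁ ht₁ hδ t ht
    obtain ⟨h1, h2, _⟩ := solfacts φ hφ
    have htT : t ∈ Ioi T := lt_of_lt_of_le ht₁ ht
    have hφt₁0 : 0 ≤ euclNorm (φ t₁) := Real.sqrt_nonneg _
    have hbound : euclNorm (φ t) ≤ κ * euclNorm (φ t₁) := by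
      rcases le_or_gt t T₀ with hcase | hcase
      · have hsm : (t - t₁) * (2 * Ca) ≤ N := by
          have h3 : (t - t₁) * (2 * Ca) ≤ (T₀ - T) * (2 * Ca) := by nlinarith [mem_Ioi.1 ht₁]
          exact h3.trans (Nat.le_ceil _)
        have h4 := h1 N t₁ ht₁ t htT ht hsm
        refine h4.trans ?_
        apply mul_le_mul_of_nonneg_right _ hφt₁0
        rw [hκ]
        nlinarith [pow_pos (zero_lt_two (α := ℝ)) N]
      · rcases le_or_gt t₁ T₀ with hc2 | hc2
        · have hstep1 : euclNorm (φ T₀) ≤ 2^N * euclNorm (φ t₁) := by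
            apply h1 N t₁ ht₁ T₀ hT₀mem hc2
            have h3 : (T₀ - t₁) * (2 * Ca) ≤ (T₀ - T) * (2 * Ca) := by
              nlinarith [mem_Ioi.1 ht₁]
            exact h3.trans (Nat.le_ceil _)
          have hstep2 : euclNorm (φ t) ≤ 8 * euclNorm (φ T₀) := h2 T₀ t le_rfl hcase.le
          calc euclNorm (φ t) ≤ 8 * (2^N * euclNorm (φ t₁)) :=
                hstep2.trans (mul_le_mul_of_nonneg_left hstep1 (by norm_num))
            _ = κ * euclNorm (φ t₁) := by rw [hκ]; ring
        · have h3 := h2 t₁ t hc2.le ht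
          refine h3.trans ?_
          apply mul_le_mul_of_nonneg_right _ hφt₁0
          rw [hκ]
          nlinarith
    calc euclNorm (φ t) ≤ κ * euclNorm (φ t₁) := hbound
      _ < κ * (ε / κ) := by exact mul_lt_mul_of_pos_left hδ hκpos
      _ = ε := by field_simp
  · intro φ hφ
    exact (solfacts φ hφ).2.2
end
end
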